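/- arXiv:2107.02587 — 3 statements merged into one kernel-verified Lean document; each statement's English description precedes it below -/
import Mathlib

section
/- Every closed subset C of the generalized Baire space κ^κ is κ-Borel isomorphic to a superclosed subset C′ of κ^κ. -/
universe u v

open Cardinal Set

namespace GDST

/-- A *limit element* of an order: an element with some predecessor but
no immediate predecessor (i.e. it sits at a limit position). -/
def IsLimitElt {α : Type v} [LT α] (a : α) : Prop :=
  (∃ b, b < a) ∧ ∀ b, b < a → ∃ c, b < c ∧ c < a

/-- The space `X` has weight at most `κ`: it admits a topological basis of cardinality ≤ κ. -/
def HasWeightLE (κ : Cardinal.{u}) (X : Type u) [TopologicalSpace X] : Prop :=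
  ∃ B : Set (Set X), TopologicalSpace.IsTopologicalBasis B ∧ #B ≤ κ

/-- `X` is `κ`-additive: intersections of fewer than `κ` open sets are open. -/
def KAdditive (κ : Cardinal.{u}) (X : Type u) [TopologicalSpace X] : Prop :=
  ∀ S : Set (Set X), #S < κ → (∀ U ∈ S, IsOpen U) → IsOpen (⋂₀ S)

/-- `X` is `κ`-Lindelöf: every open cover has a subcover of size `< κ`. -/
def KLindelof (κ : Cardinal.{u}) (X : Type u) [TopologicalSpace X] : Prop :=
  ∀ 𝒰 : Set (Set X), (∀ U ∈ 𝒰, IsOpen U) → ⋃₀ 𝒰 = Set.univ →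
    ∃ 𝒱 ⊆ 𝒰, #𝒱 < κ ∧ ⋃₀ 𝒱 = Set.univ

/-- `X` is `κ`-perfect: no point `x` is `κ`-isolated, i.e. no `{x}` is an intersection
of fewer than `κ` open sets. -/
def KPerfect (κ : Cardinal.{u}) (X : Type u) [TopologicalSpace X] : Prop :=
  ∀ x : X, ¬ ∃ S : Set (Set X), #S < κ ∧ (∀ U ∈ S, IsOpen U) ∧ ⋂₀ S = {x}

/-- `A` is `G_δ^κ` in `X`: an intersection of `κ`-many open sets. -/
def IsGDeltaKappa (κ : Cardinal.{u}) {X : Type u} [TopologicalSpace X] (A : Set X) : Prop :=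
  ∃ U : κ.ord.ToType → Set X, (∀ i, IsOpen (U i)) ∧ A = ⋂ i, U i

/-! ### Generalized Baire and Cantor spaces -/

/-- The bounded topology on `ι → A`: generated by the sets of functions with a
prescribed restriction to a proper initial segment `{b | b < a}` of `ι`. -/
def BoundedTopology (ι : Type u) [LinearOrder ι] (A : Type v) : TopologicalSpace (ι → A) :=
  TopologicalSpace.generateFrom
    {U | ∃ (a : ι) (y : ι → A), U = {x : ι → A | ∀ b, b < a → x b = y b}}

/-- The generalized Baire space `κ^κ`. -/
def GenBaire (κ : Cardinal.{u}) : Type u := κ.ord.ToType → κ.ord.ToType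

noncomputable instance (κ : Cardinal.{u}) : TopologicalSpace (GenBaire κ) :=
  BoundedTopology κ.ord.ToType κ.ord.ToType

/-- The generalized Cantor space `2^κ`. -/
def GenCantor (κ : Cardinal.{u}) : Type u := κ.ord.ToType → Bool

noncomputable instance (κ : Cardinal.{u}) : TopologicalSpace (GenCantor κ) :=
  BoundedTopology κ.ord.ToType Bool

/-! ### The strong and fair (strong) κ-Choquet games -/

/-- A transfinite sequence of moves of player I: at each round a pair `(U, x)`. -/
abbrev IMoves (κ : Cardinal.{u}) (X : Type u) : Type u := κ.ord.ToType → Set X × X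

/-- A strategy for player II: given the moves of I (only the moves up to the current
round may be used, see `IsIIStrategy`) and the current round, produce II's move. -/
abbrev Strategy (κ : Cardinal.{u}) (X : Type u) : Type u := IMoves κ X → κ.ord.ToType → Set X

/-- The intersection of the sets played before round `a`. -/
def InterBelow {ι : Type u} {X : Type u} [LT ι] (V : ι → Set X) (a : ι) : Set X :=
  ⋂ b, ⋂ (_ : b < a), V b

/-- `U` is relatively open in `T`. -/
def RelOpenIn {X : Type u} [TopologicalSpace X] (T U : Set X) : Prop :=
  ∃ W : Set X, IsOpen W ∧ U = W ∩ T

/-- Player I's move at round `a` is legal: `(f a).1` is a nonempty relatively open subset of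
the intersection of all previously played sets, and the point `(f a).2` belongs to it. -/
def LegalI {κ : Cardinal.{u}} {X : Type u} [TopologicalSpace X]
    (σ : Strategy κ X) (f : IMoves κ X) (a : κ.ord.ToType) : Prop :=
  RelOpenIn (InterBelow (σ f) a) (f a).1 ∧ (f a).2 ∈ (f a).1

/-- Player II's answer (by `σ`) at round `a` is legal: it is relatively open in the
intersection of all previously played sets, contains I's point, and is contained in I's set. -/
def LegalII {κ : Cardinal.{u}} {X : Type u} [TopologicalSpace X]
    (σ : Strategy κ X) (f : IMoves κ X) (a : κ.ord.ToType) : Prop :=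
  RelOpenIn (InterBelow (σ f) a) (σ f a) ∧ (f a).2 ∈ σ f a ∧ σ f a ⊆ (f a).1

/-- All moves before round `a` were legal. -/
def LegalBelow {κ : Cardinal.{u}} {X : Type u} [TopologicalSpace X]
    (σ : Strategy κ X) (f : IMoves κ X) (a : κ.ord.ToType) : Prop :=
  ∀ b, b < a → LegalI σ f b ∧ LegalII σ f b

/-- `σ` only depends on the moves of I played so far. -/
def IsIIStrategy {κ : Cardinal.{u}} {X : Type u} (σ : Strategy κ X) : Prop :=
  ∀ f g : IMoves κ X, ∀ a, (∀ b, b ≤ a → f b = g b) → σ f a = σ g a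

/-- `σ` is a winning strategy for player II in the strong κ-Choquet game `G^s_κ(X)`:
it answers legally to legal positions, and in any (possibly partial) legal run the
intersection of the played sets at every limit round—including the final one—is nonempty. -/
def WinningStrong {κ : Cardinal.{u}} {X : Type u} [TopologicalSpace X]
    (σ : Strategy κ X) : Prop :=
  IsIIStrategy σ ∧
  (∀ f a, LegalBelow σ f a → LegalI σ f a → LegalII σ f a) ∧
  (∀ f a, IsLimitElt a → LegalBelow σ f a → (InterBelow (σ f) a).Nonempty) ∧
  (∀ f, (∀ a, LegalI σ f a ∧ LegalII σ f a) → (⋂ a, σ f a).Nonempty)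

/-- `σ` is a winning strategy for player II in the fair strong κ-Choquet game `fG^s_κ(X)`:
it answers legally to legal positions, and for every legal run either the intersection of
the played sets is empty at some limit round `< κ`, or the final intersection is nonempty. -/
def WinningFair {κ : Cardinal.{u}} {X : Type u} [TopologicalSpace X]
    (σ : Strategy κ X) : Prop :=
  IsIIStrategy σ ∧
  (∀ f a, LegalBelow σ f a → LegalI σ f a → LegalII σ f a) ∧
  (∀ f, (∀ a, LegalI σ f a ∧ LegalII σ f a) →
    (∃ a, IsLimitElt a ∧ InterBelow (σ f) a = ∅) ∨ (⋂ a, σ f a).Nonempty)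

/-- `X` is a strong κ-Choquet space. -/
def SCSpace (κ : Cardinal.{u}) (X : Type u) [TopologicalSpace X] : Prop :=
  HasWeightLE κ X ∧ ∃ σ : Strategy κ X, WinningStrong σ

/-- `X` is a strongly fair κ-Choquet space. -/
def fSCSpace (κ : Cardinal.{u}) (X : Type u) [TopologicalSpace X] : Prop :=
  HasWeightLE κ X ∧ ∃ σ : Strategy κ X, WinningFair σ

/-! ### Trees on κ -/

/-- Sequences of length `< κ` with values in `κ`, encoded as pairs `(a, x)` representing
the restriction of `x : κ → κ` to the initial segment `{b | b < a}`. -/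
abbrev TreeSeq (κ : Cardinal.{u}) : Type u := κ.ord.ToType × (κ.ord.ToType → κ.ord.ToType)

/-- `T` is a tree on `κ`: membership of `(a, x)` only depends on the restriction of `x`
below `a` (so that `T` really is a set of `<κ`-sequences), and `T` is closed under
initial segments. -/
def IsTreeOn (κ : Cardinal.{u}) (T : Set (TreeSeq κ)) : Prop :=
  (∀ a, ∀ x y : κ.ord.ToType → κ.ord.ToType,
      (∀ b, b < a → x b = y b) → ((a, x) ∈ T ↔ (a, y) ∈ T)) ∧
  (∀ a x, (a, x) ∈ T → ∀ b, b ≤ a → (b, x) ∈ T)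

/-- The body `[T]` of a tree `T` on `κ`. -/
def TreeBody (κ : Cardinal.{u}) (T : Set (TreeSeq κ)) : Set (GenBaire κ) :=
  {x | ∀ a, (a, x) ∈ T}

/-- `T` is pruned: every element has extensions in `T` of every length `< κ`. -/
def TreePruned (κ : Cardinal.{u}) (T : Set (TreeSeq κ)) : Prop :=
  ∀ a x, (a, x) ∈ T → ∀ c, a ≤ c → ∃ y, (∀ b, b < a → y b = x b) ∧ (c, y) ∈ T

/-- `T` is `<κ`-closed: a limit-length sequence all of whose proper initial segments
lie in `T` lies in `T`. -/
def TreeLtClosed (κ : Cardinal.{u}) (T : Set (TreeSeq κ)) : Prop :=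
  ∀ a, IsLimitElt a → ∀ x, (∀ b, b < a → (b, x) ∈ T) → (a, x) ∈ T

/-- `T` is superclosed: a pruned and `<κ`-closed tree. -/
def IsSuperclosedTree (κ : Cardinal.{u}) (T : Set (TreeSeq κ)) : Prop :=
  IsTreeOn κ T ∧ TreePruned κ T ∧ TreeLtClosed κ T

/-- A subset of the generalized Baire space is superclosed if it is the body of a
superclosed tree. -/
def IsSuperclosedSet (κ : Cardinal.{u}) (C : Set (GenBaire κ)) : Prop :=
  ∃ T : Set (TreeSeq κ), IsSuperclosedTree κ T ∧ C = TreeBody κ T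

/-- The `a`-th level of a tree `T` on `κ`. -/
def TreeLev (κ : Cardinal.{u}) (T : Set (TreeSeq κ)) (a : κ.ord.ToType) :
    Set ({b : κ.ord.ToType // b < a} → κ.ord.ToType) :=
  {s | ∃ x, (a, x) ∈ T ∧ ∀ b : {b : κ.ord.ToType // b < a}, x b.1 = s b}

/-- κ has the tree property: every tree on κ all of whose levels are nonempty of size `< κ`
has a (cofinal) branch. -/
def TreeProperty (κ : Cardinal.{u}) : Prop :=
  ∀ T : Set (TreeSeq κ), IsTreeOn κ T →
    (∀ a, (TreeLev κ T a).Nonempty ∧ #(TreeLev κ T a) < κ) →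
    ∃ x : κ.ord.ToType → κ.ord.ToType, ∀ a, (a, x) ∈ T

/-- κ is (strongly) inaccessible. -/
def Inaccessible (κ : Cardinal.{u}) : Prop :=
  ℵ₀ < κ ∧ κ.IsRegular ∧ ∀ μ : Cardinal.{u}, μ < κ → (2 : Cardinal.{u}) ^ μ < κ

/-- κ is weakly compact: inaccessible with the tree property. -/
def WeaklyCompact (κ : Cardinal.{u}) : Prop := Inaccessible κ ∧ TreeProperty κ

/-! ### κ-Borel sets -/

/-- The κ-Borel subsets of a topological space: the smallest family containing the open
sets and closed under complements and unions of at most κ-many sets. -/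
inductive KBorel (κ : Cardinal.{u}) {X : Type u} [TopologicalSpace X] : Set X → Prop
  | of_isOpen (U : Set X) : IsOpen U → KBorel κ U
  | compl (S : Set X) : KBorel κ S → KBorel κ Sᶜ
  | iUnion (ι : Type u) (f : ι → Set X) : #ι ≤ κ → (∀ i, KBorel κ (f i)) → KBorel κ (⋃ i, f i)

/-! ### 𝔾-metric spaces -/

section GMetric

variable (G : Type u) [AddCommGroup G] [LinearOrder G] [IsOrderedAddMonoid G]

/-- The positive cone of `G` has coinitiality `κ`: there is a coinitial set of positive
elements of size `≤ κ`, and no such set of size `< κ`. -/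
def HasDegree (κ : Cardinal.{u}) : Prop :=
  (∃ S : Set G, (∀ ε ∈ S, 0 < ε) ∧ (∀ δ : G, 0 < δ → ∃ ε ∈ S, ε ≤ δ) ∧ #S ≤ κ) ∧
  (∀ S : Set G, (∀ ε ∈ S, 0 < ε) → (∀ δ : G, 0 < δ → ∃ ε ∈ S, ε ≤ δ) → κ ≤ #S)

variable {G}

/-- `d` is a `𝔾`-metric on `X`. -/
structure IsGMetric {X : Type u} (d : X → X → G) : Prop where
  nonneg : ∀ x y, 0 ≤ d x y
  eq_zero_iff : ∀ x y, d x y = 0 ↔ x = y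
  symm : ∀ x y, d x y = d y x
  triangle : ∀ x y z, d x z ≤ d x y + d y z

/-- The open ball of center `x` and radius `ε`. -/
def GBall {X : Type u} (d : X → X → G) (x : X) (ε : G) : Set X := {y | d x y < ε}

/-- The topology induced by a `𝔾`-metric. -/
def GMetricTopology {X : Type u} (d : X → X → G) : TopologicalSpace X :=
  TopologicalSpace.generateFrom {U | ∃ x ε, 0 < ε ∧ U = GBall d x ε}

/-- The `𝔾`-metric `d` is compatible with the topology of `X`. -/
def GCompatible {X : Type u} [t : TopologicalSpace X] (d : X → X → G) : Prop :=
  GMetricTopology d = t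

/-- A `κ`-sequence is `d`-Cauchy. -/
def GCauchy (κ : Cardinal.{u}) {X : Type u} (d : X → X → G) (x : κ.ord.ToType → X) : Prop :=
  ∀ ε : G, 0 < ε → ∃ a, ∀ b, a ≤ b → ∀ c, a ≤ c → d (x b) (x c) < ε

/-- A `κ`-sequence `d`-converges to `y`. -/
def GConvergesTo (κ : Cardinal.{u}) {X : Type u} (d : X → X → G)
    (x : κ.ord.ToType → X) (y : X) : Prop :=
  ∀ ε : G, 0 < ε → ∃ a, ∀ b, a ≤ b → d (x b) y < ε

/-- `d` is Cauchy-complete: every `d`-Cauchy `κ`-sequence converges. -/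
def GCauchyComplete (κ : Cardinal.{u}) {X : Type u} (d : X → X → G) : Prop :=
  ∀ x : κ.ord.ToType → X, GCauchy κ d x → ∃ y, GConvergesTo κ d x y

/-- `X` is `𝔾`-metrizable: it admits a compatible `𝔾`-metric. -/
def GMetrizable (G : Type u) [AddCommGroup G] [LinearOrder G] [IsOrderedAddMonoid G]
    (X : Type u) [TopologicalSpace X] : Prop :=
  ∃ d : X → X → G, IsGMetric d ∧ GCompatible d

/-- `X` is `𝔾`-Polish: it has weight `≤ κ` and admits a compatible Cauchy-complete
`𝔾`-metric. -/
def GPolish (G : Type u) [AddCommGroup G] [LinearOrder G] [IsOrderedAddMonoid G] (κ : Cardinal.{u})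
    (X : Type u) [TopologicalSpace X] : Prop :=
  HasWeightLE κ X ∧ ∃ d : X → X → G, IsGMetric d ∧ GCompatible d ∧ GCauchyComplete κ d

/-- `d` is spherically complete: every (nonempty) ⊆-decreasing transfinite sequence of open
`d`-balls has nonempty intersection. -/
def SphericallyComplete {X : Type u} (d : X → X → G) : Prop :=
  ∀ o : Ordinal.{u}, o ≠ 0 → ∀ c : o.ToType → Set X,
    (∀ i, ∃ x ε, 0 < ε ∧ c i = GBall d x ε) →
    (∀ i j, i ≤ j → c j ⊆ c i) → (⋂ i, c i).Nonempty

/-- `d` is spherically `<κ`-complete: every (nonempty) ⊆-decreasing sequence of open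
`d`-balls of length `< κ` has nonempty intersection. -/
def SphericallyLtComplete (κ : Cardinal.{u}) {X : Type u} (d : X → X → G) : Prop :=
  ∀ o : Ordinal.{u}, o ≠ 0 → o < κ.ord → ∀ c : o.ToType → Set X,
    (∀ i, ∃ x ε, 0 < ε ∧ c i = GBall d x ε) →
    (∀ i j, i ≤ j → c j ⊆ c i) → (⋂ i, c i).Nonempty

/-- `X` is a spherically complete `𝔾`-Polish space. -/
def GPolishSphericallyComplete (G : Type u) [AddCommGroup G] [LinearOrder G] [IsOrderedAddMonoid G] (κ : Cardinal.{u})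
    (X : Type u) [TopologicalSpace X] : Prop :=
  HasWeightLE κ X ∧
    ∃ d : X → X → G, IsGMetric d ∧ GCompatible d ∧ GCauchyComplete κ d ∧ SphericallyComplete d

/-- `X` is a spherically `<κ`-complete `𝔾`-Polish space. -/
def GPolishSphericallyLtComplete (G : Type u) [AddCommGroup G] [LinearOrder G] [IsOrderedAddMonoid G] (κ : Cardinal.{u})
    (X : Type u) [TopologicalSpace X] : Prop :=
  HasWeightLE κ X ∧
    ∃ d : X → X → G, IsGMetric d ∧ GCompatible d ∧ GCauchyComplete κ d ∧
      SphericallyLtComplete κ d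

end GMetric

/-! ### κ-Borel spaces -/

/-- `ℬ` is a `κ⁺`-algebra on `X`: closed under complements and unions of at most
κ-many sets. -/
def IsKplusAlgebra (κ : Cardinal.{u}) {X : Type u} (ℬ : Set (Set X)) : Prop :=
  (∀ S ∈ ℬ, Sᶜ ∈ ℬ) ∧
  (∀ (ι : Type u) (f : ι → Set X), #ι ≤ κ → (∀ i, f i ∈ ℬ) → (⋃ i, f i) ∈ ℬ)

/-- `ℬ` separates the points of `X`. -/
def SepPoints {X : Type u} (ℬ : Set (Set X)) : Prop :=
  ∀ x y : X, x ≠ y → ∃ S ∈ ℬ, x ∈ S ∧ y ∉ S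

/-- `(X, ℬ)` is a κ-Borel space: a `κ⁺`-algebra that separates points and is generated
(as a `κ⁺`-algebra) by a subfamily of size `≤ κ`. -/
def IsKBorelSpace (κ : Cardinal.{u}) {X : Type u} (ℬ : Set (Set X)) : Prop :=
  IsKplusAlgebra κ ℬ ∧ SepPoints ℬ ∧
    ∃ 𝒢 ⊆ ℬ, #𝒢 ≤ κ ∧
      ∀ ℬ' : Set (Set X), IsKplusAlgebra κ ℬ' → 𝒢 ⊆ ℬ' → ℬ ⊆ ℬ'

/-- The restriction `ℬ↾A` of a family of subsets of `X` to `A ⊆ X`. -/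
def RestrictFam {X : Type u} (ℬ : Set (Set X)) (A : Set X) : Set (Set ↥A) :=
  {T | ∃ S ∈ ℬ, T = Subtype.val ⁻¹' S}

/-- The family of κ-Borel sets of a topological space. -/
def KBorelFam (κ : Cardinal.{u}) (X : Type u) [TopologicalSpace X] : Set (Set X) :=
  {S | KBorel κ S}

/-- `e` is a κ-Borel isomorphism between `(X, ℬ)` and `(Y, 𝒞)`: a bijection under which
images and preimages of distinguished sets are distinguished. -/
def IsKBorelSpaceIso {X Y : Type u} (ℬ : Set (Set X)) (𝒞 : Set (Set Y)) (e : X ≃ Y) : Prop :=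
  (∀ S ∈ ℬ, e '' S ∈ 𝒞) ∧ (∀ S ∈ 𝒞, e ⁻¹' S ∈ ℬ)

/-- `(X, ℬ)` is a standard κ-Borel space: it is a κ-Borel space which is κ-Borel isomorphic
to a κ-Borel subset of the generalized Baire space (with the restricted κ-Borel structure). -/
def IsStandardKBorel (κ : Cardinal.{u}) {X : Type u} (ℬ : Set (Set X)) : Prop :=
  IsKBorelSpace κ ℬ ∧
    ∃ B₀ : Set (GenBaire κ), KBorel κ B₀ ∧
      ∃ e : X ≃ ↥B₀, IsKBorelSpaceIso ℬ (RestrictFam (KBorelFam κ (GenBaire κ)) B₀) e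

/-! ### Auxiliary development for Statement 10 -/

section Stmt10Aux

variable {κ : Cardinal.{u}}

/-- Basic neighborhoods in the generalized Baire space. -/
def Nb (a : κ.ord.ToType) (y : GenBaire κ) : Set (GenBaire κ) :=
  {x | ∀ b, b < a → x b = y b}

lemma isOpen_Nb (a : κ.ord.ToType) (y : GenBaire κ) : IsOpen (Nb a y) :=
  TopologicalSpace.GenerateOpen.basic _ ⟨a, y, rfl⟩

lemma mem_Nb_self (a : κ.ord.ToType) (y : GenBaire κ) : y ∈ Nb a y := fun _ _ => rfl

lemma toType_nonempty (h0 : κ ≠ 0) : Nonempty κ.ord.ToType :=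
  Ordinal.toType_nonempty_iff_ne_zero.2 (fun h => h0 (by simpa using congrArg Ordinal.card h))

lemma exists_nb_subset (h0 : κ ≠ 0) {U : Set (GenBaire κ)} (hU : IsOpen U) :
    ∀ x ∈ U, ∃ a, Nb a x ⊆ U := by
  have h : TopologicalSpace.GenerateOpen
      {U | ∃ (a : κ.ord.ToType) (y : GenBaire κ),
        U = {x : GenBaire κ | ∀ b, b < a → x b = y b}} U := hU
  clear hU
  induction h with
  | basic V hV =>
    obtain ⟨a, y, rfl⟩ := hV
    intro x hx
    exact ⟨a, fun w hw b hb => (hw b hb).trans (hx b hb)⟩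
  | univ =>
    intro x _
    exact ⟨(toType_nonempty h0).some, Set.subset_univ _⟩
  | inter V W _ _ ihV ihW =>
    intro x hx
    obtain ⟨a, ha⟩ := ihV x hx.1
    obtain ⟨b, hb⟩ := ihW x hx.2
    exact ⟨max a b, fun w hw =>
      ⟨ha fun c hc => hw c (lt_of_lt_of_le hc (le_max_left _ _)),
       hb fun c hc => hw c (lt_of_lt_of_le hc (le_max_right _ _))⟩⟩
  | sUnion S _ ih =>
    intro x hx
    obtain ⟨V, hVS, hxV⟩ := hx
    obtain ⟨a, ha⟩ := ih V hVS x hxV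
    exact ⟨a, ha.trans (Set.subset_sUnion_of_mem hVS)⟩

lemma t2_genBaire (hκ : ℵ₀ ≤ κ) : T2Space (GenBaire κ) := by
  haveI : NoMaxOrder κ.ord.ToType := Cardinal.noMaxOrder hκ
  constructor
  intro x y hxy
  have hb : ∃ b, x b ≠ y b := by
    by_contra h
    push_neg at h
    exact hxy (funext h)
  obtain ⟨b, hb⟩ := hb
  obtain ⟨a, hab⟩ := exists_gt b
  refine ⟨Nb a x, Nb a y, isOpen_Nb a x, isOpen_Nb a y, mem_Nb_self a x, mem_Nb_self a y, ?_⟩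
  rw [Set.disjoint_left]
  intro w hw1 hw2
  exact hb ((hw1 b hab).symm.trans (hw2 b hab))

lemma mem_of_closed_nb (hκ : ℵ₀ ≤ κ) {C : Set (GenBaire κ)} (hC : IsClosed C)
    {x : GenBaire κ} (h : ∀ a, (Nb a x ∩ C).Nonempty) : x ∈ C := by
  by_contra hx
  obtain ⟨a, ha⟩ := exists_nb_subset (aleph0_pos.trans_le hκ).ne' hC.isOpen_compl x hx
  obtain ⟨w, hw1, hw2⟩ := h a
  exact ha hw1 hw2

/-! #### κ-Borel helper lemmas -/

section KBorelHelpers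

variable {X : Type u} [TopologicalSpace X]

lemma KBorel.of_isClosed' {S : Set X} (hS : IsClosed S) : KBorel κ S := by
  have h := KBorel.compl (κ := κ) Sᶜ (KBorel.of_isOpen _ hS.isOpen_compl)
  rwa [compl_compl] at h

lemma KBorel.union2 (hκ : ℵ₀ ≤ κ) {A B : Set X} (hA : KBorel κ A) (hB : KBorel κ B) :
    KBorel κ (A ∪ B) := by
  have h : A ∪ B = ⋃ i : ULift.{u} Bool, (if i.down then A else B) := by
    ext x
    simp only [Set.mem_iUnion, Set.mem_union]
    constructor
    · rintro (h | h)
      · exact ⟨⟨true⟩, by simpa⟩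
      · exact ⟨⟨false⟩, by simpa⟩
    · rintro ⟨⟨i⟩, hi⟩
      cases i
      · right; simpa using hi
      · left; simpa using hi
  rw [h]
  refine KBorel.iUnion _ _ (le_trans Cardinal.mk_le_aleph0 hκ) (fun i => ?_)
  rcases i with ⟨b⟩
  cases b
  · simpa using hB
  · simpa using hA

lemma KBorel.inter2 (hκ : ℵ₀ ≤ κ) {A B : Set X} (hA : KBorel κ A) (hB : KBorel κ B) :
    KBorel κ (A ∩ B) := by
  have h : A ∩ B = (Aᶜ ∪ Bᶜ)ᶜ := by rw [Set.compl_union, compl_compl, compl_compl]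
  rw [h]
  exact KBorel.compl _ (KBorel.union2 hκ (KBorel.compl _ hA) (KBorel.compl _ hB))

lemma KBorel.of_small [T1Space X] {S : Set X} (hS : #S ≤ κ) : KBorel κ S := by
  have h : S = ⋃ i : S, {(i : X)} := (Set.iUnion_of_singleton_coe S).symm
  rw [h]
  exact KBorel.iUnion _ _ hS fun i => KBorel.of_isClosed' isClosed_singleton

lemma KBorel.all_of_small [T1Space X] (hX : #X ≤ κ) (S : Set X) : KBorel κ S :=
  KBorel.of_small (le_trans (Cardinal.mk_set_le S) hX)

lemma KBorel.preimage {Y : Type u} [TopologicalSpace Y] {f : X → Y} (hf : Continuous f)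
    {S : Set Y} (hS : KBorel κ S) : KBorel κ (f ⁻¹' S) := by
  induction hS with
  | of_isOpen U hU => exact KBorel.of_isOpen _ (hU.preimage hf)
  | compl S _ ih => rw [Set.preimage_compl]; exact KBorel.compl _ ih
  | iUnion ι g hι _ ih => rw [Set.preimage_iUnion]; exact KBorel.iUnion _ _ hι ih

lemma KBorel.subtype_image (hκ : ℵ₀ ≤ κ) {Z : Set X} (hZ : KBorel κ Z)
    {S : Set ↥Z} (hS : KBorel κ S) : KBorel κ (Subtype.val '' S : Set X) := by
  induction hS with
  | of_isOpen U hU =>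
    obtain ⟨V, hV, rfl⟩ := isOpen_induced_iff.mp hU
    rw [Subtype.image_preimage_coe]
    exact KBorel.inter2 hκ hZ (KBorel.of_isOpen _ hV)
  | compl S _ ih =>
    have h : (Subtype.val '' Sᶜ : Set X) = Z ∩ (Subtype.val '' S)ᶜ := by
      ext x
      constructor
      · rintro ⟨s, hs, rfl⟩
        refine ⟨s.2, fun hmem => hs ?_⟩
        obtain ⟨t, ht, hts⟩ := hmem
        rwa [Subtype.ext hts] at ht
      · rintro ⟨hxZ, hx⟩
        exact ⟨⟨x, hxZ⟩, fun hmem => hx ⟨⟨x, hxZ⟩, hmem, rfl⟩, rfl⟩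
    rw [h]
    exact KBorel.inter2 hκ hZ (KBorel.compl _ ih)
  | iUnion ι g hι _ ih =>
    rw [Set.image_iUnion]
    exact KBorel.iUnion _ _ hι ih

lemma kborel_transfer [T1Space X] (hκ : ℵ₀ ≤ κ) {Y Z : Set X} (hZ : KBorel κ Z)
    (f : ↥Y → ↥Z) {W : Set X} (hW : #W ≤ κ)
    (hf : ∀ y : ↥Y, (y : X) ∉ W → ((f y : X) = (y : X)))
    {S : Set ↥Z} (hS : KBorel κ S) : KBorel κ (f ⁻¹' S) := by
  classical
  set V : Set ↥Y := {y | (y : X) ∈ W} with hV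
  have hVsmall : #V ≤ κ := by
    refine le_trans (Cardinal.mk_le_of_injective
      (f := fun v : V => (⟨((v : ↥Y) : X), v.2⟩ : W)) ?_) hW
    intro v w hvw
    have hvw' : (⟨((v : ↥Y) : X), v.2⟩ : W) = (⟨((w : ↥Y) : X), w.2⟩ : W) := hvw
    have h1 := congrArg (Subtype.val : ↥W → X) hvw'
    exact Subtype.ext (Subtype.ext h1)
  have key : f ⁻¹' S = (f ⁻¹' S ∩ V) ∪ ((Subtype.val ⁻¹' (Subtype.val '' S)) ∩ Vᶜ) := by
    ext y
    constructor
    · intro hy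
      by_cases hyV : y ∈ V
      · exact Or.inl ⟨hy, hyV⟩
      · exact Or.inr ⟨⟨f y, hy, hf y hyV⟩, hyV⟩
    · rintro (⟨hy, _⟩ | ⟨⟨s, hsS, hsy⟩, hyV⟩)
      · exact hy
      · have hs : s = f y := Subtype.ext (by rw [hsy, hf y hyV])
        show f y ∈ S
        rwa [hs] at hsS
  rw [key]
  refine KBorel.union2 hκ ?_ ?_
  · exact KBorel.of_small (le_trans (Cardinal.mk_le_mk_of_subset Set.inter_subset_right) hVsmall)
  · exact KBorel.inter2 hκ
      (KBorel.preimage continuous_subtype_val (KBorel.subtype_image hκ hZ hS))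
      (KBorel.compl _ (KBorel.of_small hVsmall))

end KBorelHelpers

/-! #### Cardinal arithmetic -/

lemma pow_le_self (hreg : κ.IsRegular) (hpow : (2 : Cardinal.{u}) ^< κ = κ)
    {μ : Cardinal.{u}} (hμ : μ < κ) : κ ^ μ ≤ κ := by
  have hκ := hreg.aleph0_le
  have h2 : ∀ c : Cardinal.{u}, c < κ → c ^ μ ≤ κ := by
    intro c hc
    calc c ^ μ ≤ (2 ^ c) ^ μ := Cardinal.power_le_power_right (Cardinal.cantor c).le
      _ = 2 ^ (c * μ) := Cardinal.power_mul.symm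
      _ ≤ 2 ^< κ := Cardinal.le_powerlt 2 (Cardinal.mul_lt_of_lt hκ hc hμ)
      _ = κ := hpow
  have hβ : #μ.ord.ToType = μ := Cardinal.mk_ord_toType μ
  have hα : #κ.ord.ToType = κ := Cardinal.mk_ord_toType κ
  have hbd : ∀ f : μ.ord.ToType → κ.ord.ToType, ∃ a : κ.ord.ToType, ∀ i, f i < a := by
    intro f
    letI iwo : IsWellOrder κ.ord.ToType (· < ·) := isWellOrder_lt
    set g : μ.ord.ToType → Ordinal.{u} :=
      fun i => Ordinal.typein ((· < ·) : κ.ord.ToType → κ.ord.ToType → Prop) (f i) with hg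
    have hs : (⨆ i, g i) < κ.ord :=
      Cardinal.iSup_lt_ord_of_isRegular hreg (by rw [hβ]; exact hμ)
        (fun i => Ordinal.typein_lt_self _)
    have hs' : Order.succ (⨆ i, g i) < κ.ord := (Cardinal.isSuccLimit_ord hκ).succ_lt hs
    refine ⟨Ordinal.ToType.mk (o := κ.ord) ⟨Order.succ _, hs'⟩, fun i => ?_⟩
    have h1 : g i ≤ ⨆ i, g i := Ordinal.le_iSup g i
    have h2' : (Ordinal.ToType.mk (o := κ.ord)).symm (f i) <
        (⟨Order.succ _, hs'⟩ : Set.Iio κ.ord) := by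
      have hcoe : ((Ordinal.ToType.mk (o := κ.ord)).symm (f i) : Ordinal) = g i := rfl
      rw [← Subtype.coe_lt_coe, hcoe]
      exact h1.trans_lt (Order.lt_succ _)
    calc f i = Ordinal.ToType.mk (o := κ.ord) ((Ordinal.ToType.mk (o := κ.ord)).symm (f i)) :=
          ((Ordinal.ToType.mk (o := κ.ord)).apply_symm_apply _).symm
      _ < _ := (Ordinal.ToType.mk (o := κ.ord)).lt_iff_lt.mpr h2'
  have hbound : ∀ a : κ.ord.ToType,
      #{f : μ.ord.ToType → κ.ord.ToType | ∀ i, f i < a} ≤ κ := by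
    intro a
    have hinj : Function.Injective
        (fun f : {f : μ.ord.ToType → κ.ord.ToType | ∀ i, f i < a} =>
          (fun i => (⟨(f : μ.ord.ToType → κ.ord.ToType) i, f.2 i⟩ : Set.Iio a) :
            μ.ord.ToType → Set.Iio a)) := by
      intro f g hfg
      apply Subtype.ext
      funext i
      exact congrArg Subtype.val (congrFun hfg i)
    calc #{f : μ.ord.ToType → κ.ord.ToType | ∀ i, f i < a}
        ≤ #(μ.ord.ToType → Set.Iio a) := Cardinal.mk_le_of_injective hinj
      _ = #(Set.Iio a) ^ μ := by rw [← Cardinal.power_def, hβ]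
      _ ≤ κ := h2 _ (Cardinal.mk_Iio_ord_toType a)
  have cover : (Set.univ : Set (μ.ord.ToType → κ.ord.ToType)) ⊆
      ⋃ a : κ.ord.ToType, {f : μ.ord.ToType → κ.ord.ToType | ∀ i, f i < a} := by
    intro f _
    obtain ⟨a, ha⟩ := hbd f
    exact Set.mem_iUnion.mpr ⟨a, ha⟩
  calc κ ^ μ = #(μ.ord.ToType → κ.ord.ToType) := by rw [← Cardinal.power_def, hα, hβ]
    _ = #(Set.univ : Set (μ.ord.ToType → κ.ord.ToType)) := Cardinal.mk_univ.symm
    _ ≤ #(⋃ a : κ.ord.ToType, {f : μ.ord.ToType → κ.ord.ToType | ∀ i, f i < a}) :=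
        Cardinal.mk_le_mk_of_subset cover
    _ ≤ Cardinal.sum (fun a : κ.ord.ToType =>
        #{f : μ.ord.ToType → κ.ord.ToType | ∀ i, f i < a}) := Cardinal.mk_iUnion_le_sum_mk
    _ ≤ Cardinal.sum (fun _ : κ.ord.ToType => κ) := Cardinal.sum_le_sum _ _ hbound
    _ = #κ.ord.ToType * κ := Cardinal.sum_const' _ _
    _ = κ := by rw [hα, Cardinal.mul_eq_self hκ]

/-! #### Trees -/

/-- The tree of a set `C ⊆ κ^κ`. -/
def treeOf (κ : Cardinal.{u}) (C : Set (GenBaire κ)) : Set (TreeSeq κ) :=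
  {p | ∃ y ∈ C, ∀ b, b < p.1 → y b = p.2 b}

lemma isTreeOn_treeOf (C : Set (GenBaire κ)) : IsTreeOn κ (treeOf κ C) := by
  constructor
  · intro a x y hxy
    constructor
    · rintro ⟨w, hwC, hw⟩
      exact ⟨w, hwC, fun b hb => (hw b hb).trans (hxy b hb)⟩
    · rintro ⟨w, hwC, hw⟩
      exact ⟨w, hwC, fun b hb => (hw b hb).trans (hxy b hb).symm⟩
  · rintro a x ⟨w, hwC, hw⟩ b hba
    exact ⟨w, hwC, fun c hc => hw c (lt_of_lt_of_le hc hba)⟩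

/-- `x` is dead at limit level `γ` with respect to `C`. -/
def DeadAt (κ : Cardinal.{u}) (C : Set (GenBaire κ)) (γ : κ.ord.ToType)
    (x : κ.ord.ToType → κ.ord.ToType) : Prop :=
  IsLimitElt γ ∧ (γ, x) ∉ treeOf κ C ∧ ∀ β, β < γ → (β, x) ∈ treeOf κ C

lemma deadAt_unique {C : Set (GenBaire κ)} {γ γ' : κ.ord.ToType}
    {x : κ.ord.ToType → κ.ord.ToType}
    (h : DeadAt κ C γ x) (h' : DeadAt κ C γ' x) : γ = γ' := by
  rcases lt_trichotomy γ γ' with hlt | he | hgt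
  · exact absurd (h'.2.2 γ hlt) h.2.1
  · exact he
  · exact absurd (h.2.2 γ' hgt) h'.2.1

lemma deadAt_congr {C : Set (GenBaire κ)} {γ : κ.ord.ToType}
    {x y : κ.ord.ToType → κ.ord.ToType}
    (hxy : ∀ b, b < γ → x b = y b) (h : DeadAt κ C γ x) : DeadAt κ C γ y := by
  obtain ⟨h1, h2, h3⟩ := h
  refine ⟨h1, fun hy => h2 (((isTreeOn_treeOf C).1 γ x y hxy).mpr hy), fun β hβ =>
    ((isTreeOn_treeOf C).1 β x y (fun b hb => hxy b (hb.trans hβ))).mp (h3 β hβ)⟩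

/-- The superclosed hull tree: `treeOf C` together with everything extending a dead node
by the constant value `z`. -/
def hatTree (κ : Cardinal.{u}) (C : Set (GenBaire κ)) (z : κ.ord.ToType) : Set (TreeSeq κ) :=
  treeOf κ C ∪ {p | ∃ γ, γ ≤ p.1 ∧ DeadAt κ C γ p.2 ∧ ∀ b, γ ≤ b → b < p.1 → p.2 b = z}

/-- The set of added branches. -/
def Bset (κ : Cardinal.{u}) (C : Set (GenBaire κ)) (z : κ.ord.ToType) : Set (GenBaire κ) :=
  {x | ∃ γ, DeadAt κ C γ x ∧ ∀ b, γ ≤ b → x b = z}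

lemma hatTree_congr {C : Set (GenBaire κ)} {z : κ.ord.ToType} {a : κ.ord.ToType}
    {x y : κ.ord.ToType → κ.ord.ToType} (hxy : ∀ b, b < a → x b = y b)
    (h : (a, x) ∈ hatTree κ C z) : (a, y) ∈ hatTree κ C z := by
  rcases h with h | ⟨γ, hγa, hd, hz⟩
  · exact Or.inl (((isTreeOn_treeOf C).1 a x y hxy).mp h)
  · exact Or.inr ⟨γ, hγa, deadAt_congr (fun b hb => hxy b (hb.trans_le hγa)) hd,
      fun b h1 h2 => (hxy b h2).symm.trans (hz b h1 h2)⟩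

lemma isSuperclosedTree_hatTree (C : Set (GenBaire κ)) (z : κ.ord.ToType) :
    IsSuperclosedTree κ (hatTree κ C z) := by
  have dwn := (isTreeOn_treeOf C).2
  refine ⟨⟨?_, ?_⟩, ?_, ?_⟩
  · intro a x y hxy
    exact ⟨hatTree_congr hxy, hatTree_congr (fun b hb => (hxy b hb).symm)⟩
  · rintro a x (h | ⟨γ, hγa, hd, hz⟩) b hba
    · exact Or.inl (dwn a x h b hba)
    · rcases le_or_gt γ b with hγb | hbγ
      · exact Or.inr ⟨γ, hγb, hd, fun c h1 h2 => hz c h1 (h2.trans_le hba)⟩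
      · exact Or.inl (hd.2.2 b hbγ)
  · rintro a x (⟨y, hyC, hy⟩ | ⟨γ, hγa, hd, hz⟩) c hac
    · exact ⟨y, fun b hb => hy b hb, Or.inl ⟨y, hyC, fun _ _ => rfl⟩⟩
    · classical
      refine ⟨fun b => if b < a then x b else z, fun b hb => if_pos hb, Or.inr
        ⟨γ, hγa.trans hac, deadAt_congr (fun b hb => (if_pos (hb.trans_le hγa)).symm) hd, ?_⟩⟩
      intro b h1 h2
      show (if b < a then x b else z) = z
      by_cases hba : b < a
      · rw [if_pos hba]
        exact hz b h1 hba
      · rw [if_neg hba]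
  · intro a ha x hx
    by_cases hT : ∀ b, b < a → (b, x) ∈ treeOf κ C
    · by_cases haT : (a, x) ∈ treeOf κ C
      · exact Or.inl haT
      · exact Or.inr ⟨a, le_refl a, ⟨ha, haT, hT⟩,
          fun b h1 h2 => absurd h2 (not_lt.mpr h1)⟩
    · push_neg at hT
      obtain ⟨b₀, hb₀a, hb₀⟩ := hT
      rcases hx b₀ hb₀a with h | ⟨γ, hγb₀, hd, _⟩
      · exact absurd h hb₀
      refine Or.inr ⟨γ, (hγb₀.trans hb₀a.le), hd, ?_⟩
      intro b h1 h2
      obtain ⟨c, hbc, hca⟩ := ha.2 b h2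
      rcases hx c hca with h | ⟨γ', hγ'c, hd', hz'⟩
      · exact absurd (dwn c x h γ (h1.trans hbc.le)) hd.2.1
      · exact hz' b ((deadAt_unique hd hd') ▸ h1) hbc

lemma treeBody_hatTree (hκ : ℵ₀ ≤ κ) {C : Set (GenBaire κ)} (hC : IsClosed C)
    (z : κ.ord.ToType) : TreeBody κ (hatTree κ C z) = C ∪ Bset κ C z := by
  haveI : NoMaxOrder κ.ord.ToType := Cardinal.noMaxOrder hκ
  ext x
  constructor
  · intro hx
    by_cases hT : ∀ a, (a, x) ∈ treeOf κ C
    · left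
      refine mem_of_closed_nb hκ hC (fun a => ?_)
      obtain ⟨y, hyC, hy⟩ := hT a
      exact ⟨y, fun b hb => hy b hb, hyC⟩
    · push_neg at hT
      obtain ⟨a₀, ha₀⟩ := hT
      rcases hx a₀ with h | ⟨γ, hγ, hd, _⟩
      · exact absurd h ha₀
      right
      refine ⟨γ, hd, fun b hb => ?_⟩
      obtain ⟨a', hba'⟩ := exists_gt b
      rcases hx a' with h | ⟨γ', hγ', hd', hz'⟩
      · exact absurd ((isTreeOn_treeOf C).2 a' x h γ (hb.trans hba'.le)) hd.2.1
      · exact hz' b ((deadAt_unique hd hd') ▸ hb) hba'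
  · rintro (hxC | ⟨γ, hd, hz⟩) a
    · exact Or.inl ⟨x, hxC, fun _ _ => rfl⟩
    · rcases le_or_gt γ a with h | h
      · exact Or.inr ⟨γ, h, hd, fun b h1 _ => hz b h1⟩
      · exact Or.inl (hd.2.2 a h)

lemma bset_inter_eq_empty {C : Set (GenBaire κ)} {z : κ.ord.ToType} :
    ∀ x ∈ Bset κ C z, x ∉ C := by
  rintro x ⟨γ, hd, _⟩ hxC
  exact hd.2.1 ⟨x, hxC, fun _ _ => rfl⟩

lemma mk_bset_le (hreg : κ.IsRegular) (hpow : (2 : Cardinal.{u}) ^< κ = κ)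
    (C : Set (GenBaire κ)) (z : κ.ord.ToType) : #(Bset κ C z) ≤ κ := by
  have hκ := hreg.aleph0_le
  have hα : #κ.ord.ToType = κ := Cardinal.mk_ord_toType κ
  have hPγ : ∀ γ : κ.ord.ToType, #{x : GenBaire κ | ∀ b, γ ≤ b → x b = z} ≤ κ := by
    intro γ
    have hinj : Function.Injective
        (fun x : {x : GenBaire κ | ∀ b, γ ≤ b → x b = z} =>
          (fun b : Set.Iio γ => (x : GenBaire κ) b.1 : Set.Iio γ → κ.ord.ToType)) := by
      intro x y hxy
      apply Subtype.ext
      funext b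
      rcases lt_or_ge b γ with hb | hb
      · exact congrFun hxy ⟨b, hb⟩
      · rw [x.2 b hb, y.2 b hb]
    calc #{x : GenBaire κ | ∀ b, γ ≤ b → x b = z}
        ≤ #(Set.Iio γ → κ.ord.ToType) := Cardinal.mk_le_of_injective hinj
      _ = κ ^ #(Set.Iio γ) := by rw [← Cardinal.power_def, hα]
      _ ≤ κ := pow_le_self hreg hpow (Cardinal.mk_Iio_ord_toType γ)
  have hsub : Bset κ C z ⊆ ⋃ γ : κ.ord.ToType, {x : GenBaire κ | ∀ b, γ ≤ b → x b = z} := by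
    rintro x ⟨γ, _, hz⟩
    exact Set.mem_iUnion.mpr ⟨γ, hz⟩
  calc #(Bset κ C z) ≤ #(⋃ γ : κ.ord.ToType, {x : GenBaire κ | ∀ b, γ ≤ b → x b = z}) :=
        Cardinal.mk_le_mk_of_subset hsub
    _ ≤ Cardinal.sum (fun γ : κ.ord.ToType => #{x : GenBaire κ | ∀ b, γ ≤ b → x b = z}) :=
        Cardinal.mk_iUnion_le_sum_mk
    _ ≤ Cardinal.sum (fun _ : κ.ord.ToType => κ) := Cardinal.sum_le_sum _ _ hPγ
    _ = #κ.ord.ToType * κ := Cardinal.sum_const' _ _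
    _ = κ := by rw [hα, Cardinal.mul_eq_self hκ]

lemma isClosed_treeBody {T : Set (TreeSeq κ)} (hT : IsTreeOn κ T) :
    IsClosed (TreeBody κ T) := by
  rw [← isOpen_compl_iff, isOpen_iff_forall_mem_open]
  intro x hx
  have hx' : ¬ ∀ a, (a, x) ∈ T := hx
  push_neg at hx'
  obtain ⟨a, ha⟩ := hx'
  refine ⟨Nb a x, ?_, isOpen_Nb a x, mem_Nb_self a x⟩
  intro w hw hwT
  exact ha ((hT.1 a w x hw).mp (hwT a))

/-! #### The small superclosed sets -/

lemma isSuperclosedTree_empty : IsSuperclosedTree κ (∅ : Set (TreeSeq κ)) := by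
  refine ⟨⟨fun a x y _ => Iff.rfl, fun a x h => h.elim⟩, fun a x h => h.elim, ?_⟩
  intro a ha x h
  obtain ⟨b, hb⟩ := ha.1
  exact absurd (h b hb) (fun hc => hc)

lemma treeBody_empty (h0 : κ ≠ 0) : TreeBody κ (∅ : Set (TreeSeq κ)) = ∅ := by
  ext x
  simp only [TreeBody, Set.mem_setOf_eq, Set.mem_empty_iff_false, iff_false, not_forall]
  exact ⟨(toType_nonempty h0).some, fun h => h⟩

/-- A superclosed "line" set of prescribed cardinality. -/
def lineTree (κ : Cardinal.{u}) (A : Set κ.ord.ToType) (z : κ.ord.ToType) : Set (TreeSeq κ) :=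
  {p | ∀ b, b < p.1 → (b = z → p.2 b ∈ A) ∧ (b ≠ z → p.2 b = z)}

def lineSet (κ : Cardinal.{u}) (A : Set κ.ord.ToType) (z : κ.ord.ToType) :
    Set (GenBaire κ) :=
  {x | ∀ b, (b = z → x b ∈ A) ∧ (b ≠ z → x b = z)}

lemma isSuperclosedTree_lineTree {A : Set κ.ord.ToType} {z : κ.ord.ToType}
    (a₀ : κ.ord.ToType) (ha₀ : a₀ ∈ A) : IsSuperclosedTree κ (lineTree κ A z) := by
  classical
  refine ⟨⟨?_, ?_⟩, ?_, ?_⟩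
  · intro a x y hxy
    constructor
    · intro h b hb
      show (b = z → y b ∈ A) ∧ (b ≠ z → y b = z)
      refine ⟨fun hbz => ?_, fun hbz => ?_⟩
      · rw [← hxy b hb]; exact (h b hb).1 hbz
      · rw [← hxy b hb]; exact (h b hb).2 hbz
    · intro h b hb
      show (b = z → x b ∈ A) ∧ (b ≠ z → x b = z)
      refine ⟨fun hbz => ?_, fun hbz => ?_⟩
      · rw [hxy b hb]; exact (h b hb).1 hbz
      · rw [hxy b hb]; exact (h b hb).2 hbz
  · intro a x h b hba c hc
    exact h c (hc.trans_le hba)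
  · intro a x h c hac
    refine ⟨fun b => if b < a then x b else if b = z then a₀ else z,
      fun b hb => if_pos hb, ?_⟩
    intro b hbc
    show (b = z → (if b < a then x b else if b = z then a₀ else z) ∈ A) ∧
      (b ≠ z → (if b < a then x b else if b = z then a₀ else z) = z)
    by_cases hba : b < a
    · rw [if_pos hba]
      exact h b hba
    · rw [if_neg hba]
      constructor
      · intro hbz
        rw [if_pos hbz]
        exact ha₀
      · intro hbz
        rw [if_neg hbz]
  · intro a ha x h b hb
    obtain ⟨c, hbc, hca⟩ := ha.2 b hb
    exact h c hca b hbc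

lemma treeBody_lineTree (hκ : ℵ₀ ≤ κ) (A : Set κ.ord.ToType) (z : κ.ord.ToType) :
    TreeBody κ (lineTree κ A z) = lineSet κ A z := by
  haveI : NoMaxOrder κ.ord.ToType := Cardinal.noMaxOrder hκ
  ext x
  constructor
  · intro h b
    obtain ⟨a, hba⟩ := exists_gt b
    exact h a b hba
  · intro h a b _
    exact h b

/-- The line set is equinumerous with `A`. -/
noncomputable def lineSetEquiv (κ : Cardinal.{u}) (A : Set κ.ord.ToType) (z : κ.ord.ToType) :
    ↥(lineSet κ A z) ≃ ↥A where
  toFun x := ⟨(x : GenBaire κ) z, (x.2 z).1 rfl⟩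
  invFun α := ⟨fun b => if b = z then (α : κ.ord.ToType) else z, by
    intro b
    refine ⟨fun hbz => ?_, fun hbz => ?_⟩
    · show (if b = z then (α : κ.ord.ToType) else z) ∈ A
      rw [if_pos hbz]
      exact α.2
    · show (if b = z then (α : κ.ord.ToType) else z) = z
      rw [if_neg hbz]⟩
  left_inv x := by
    apply Subtype.ext
    funext b
    show (if b = z then (x : GenBaire κ) z else z) = (x : GenBaire κ) b
    by_cases hbz : b = z
    · rw [if_pos hbz, hbz]
    · rw [if_neg hbz]
      exact ((x.2 b).2 hbz).symm
  right_inv α := by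
    apply Subtype.ext
    show (if z = z then (α : κ.ord.ToType) else z) = (α : κ.ord.ToType)
    rw [if_pos rfl]

end Stmt10Aux

/-- every closed subset of κ^κ is κ-Borel isomorphic to a superclosed subset. -/
theorem stmt_10 (κ : Cardinal.{u}) (hreg : κ.IsRegular) (hunc : ℵ₀ < κ)
    (hpow : (2 : Cardinal.{u}) ^< κ = κ)
    (C : Set (GenBaire κ)) (hC : IsClosed C) :
    ∃ C' : Set (GenBaire κ), IsSuperclosedSet κ C' ∧
      ∃ e : ↥C ≃ ↥C',
        (∀ S : Set ↥C', KBorel κ S → KBorel κ (e ⁻¹' S)) ∧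
        (∀ S : Set ↥C, KBorel κ S → KBorel κ (e.symm ⁻¹' S)) := by
  classical
  have hκ : ℵ₀ ≤ κ := hunc.le
  haveI := t2_genBaire (κ := κ) hκ
  have h0 : κ ≠ 0 := (aleph0_pos.trans_le hκ).ne'
  rcases le_or_gt (#↥C) κ with hsmall | hbig
  · -- C has at most κ points
    rcases eq_or_ne C ∅ with rfl | hCne
    · refine ⟨∅, ⟨∅, isSuperclosedTree_empty, (treeBody_empty h0).symm⟩, Equiv.refl _, ?_, ?_⟩ <;>
        · intro S _
          exact KBorel.all_of_small (le_trans Cardinal.mk_le_aleph0 hκ) _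
    · obtain ⟨A, hA⟩ : ∃ A : Set κ.ord.ToType, #↥A = #↥C := by
        refine Cardinal.le_mk_iff_exists_set.mp ?_
        rw [Cardinal.mk_ord_toType]
        exact hsmall
      obtain ⟨x₀, hx₀⟩ := Set.nonempty_iff_ne_empty.mpr hCne
      have hAne : A.Nonempty := by
        rw [← Set.nonempty_coe_sort]
        refine Cardinal.mk_ne_zero_iff.mp ?_
        rw [hA]
        exact Cardinal.mk_ne_zero_iff.mpr ⟨⟨x₀, hx₀⟩⟩
      obtain ⟨a₀, ha₀⟩ := hAne
      have z : κ.ord.ToType := (toType_nonempty h0).some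
      refine ⟨lineSet κ A z,
        ⟨lineTree κ A z, isSuperclosedTree_lineTree a₀ ha₀, (treeBody_lineTree hκ A z).symm⟩, ?_⟩
      have hCC' : #↥(lineSet κ A z) = #↥C := by
        rw [Cardinal.mk_congr (lineSetEquiv κ A z), hA]
      obtain ⟨e⟩ : Nonempty (↥C ≃ ↥(lineSet κ A z)) := Cardinal.eq.mp hCC'.symm
      exact ⟨e, fun S _ => KBorel.all_of_small hsmall _,
        fun S _ => KBorel.all_of_small (hCC'.trans_le hsmall) _⟩
  · -- C has more than κ points
    have z : κ.ord.ToType := (toType_nonempty h0).some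
    set B := Bset κ C z with hBdef
    set C' := C ∪ B with hC'def
    have hBody : TreeBody κ (hatTree κ C z) = C' := treeBody_hatTree hκ hC z
    have hC'closed : IsClosed C' := hBody ▸ isClosed_treeBody (isSuperclosedTree_hatTree C z).1
    have hBκ : #↥B ≤ κ := mk_bset_le hreg hpow C z
    obtain ⟨p, hp⟩ : ∃ p : Set ↥C, #↥p = κ := Cardinal.le_mk_iff_exists_set.mp hbig.le
    set P : Set (GenBaire κ) := Subtype.val '' p with hPdef
    have hPC : P ⊆ C := by
      rintro _ ⟨q, _, rfl⟩
      exact q.2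
    have hPκ : #↥P = κ := by rw [hPdef, Cardinal.mk_image_eq Subtype.val_injective, hp]
    set W := P ∪ B with hWdef
    have hWκ : #↥W ≤ κ := by
      calc #↥W ≤ #↥P + #↥B := Cardinal.mk_union_le _ _
        _ ≤ κ + κ := by rw [hPκ]; exact add_le_add_right hBκ κ
        _ = κ := Cardinal.add_eq_self hκ
    have hκW : κ ≤ #↥W :=
      hPκ.symm.trans_le (Cardinal.mk_le_mk_of_subset Set.subset_union_left)
    obtain ⟨φ⟩ : Nonempty (↥W ≃ ↥P) := Cardinal.eq.mp (by rw [hPκ]; exact hWκ.antisymm hκW)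
    have hWC' : W ⊆ C' :=
      Set.union_subset (hPC.trans Set.subset_union_left) Set.subset_union_right
    have hmemC : ∀ y : ↥C', (y : GenBaire κ) ∉ W → (y : GenBaire κ) ∈ C := by
      intro y hy
      rcases y.2 with h | h
      · exact h
      · exact absurd (Set.mem_union_right P h) hy
    let e' : ↥C' → ↥C := fun y =>
      if h : (y : GenBaire κ) ∈ W then ⟨(φ ⟨y, h⟩ : ↥P), hPC (φ ⟨y, h⟩).2⟩
      else ⟨y, hmemC y h⟩
    have he'W : ∀ y : ↥C', (y : GenBaire κ) ∉ W → ((e' y : GenBaire κ) = (y : GenBaire κ)) := by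
      intro y hy
      simp only [e', dif_neg hy]
    have he'mem : ∀ (y : ↥C') (h : (y : GenBaire κ) ∈ W),
        e' y = ⟨(φ ⟨y, h⟩ : ↥P), hPC (φ ⟨y, h⟩).2⟩ := by
      intro y h
      simp only [e', dif_pos h]
    have hbij : Function.Bijective e' := by
      constructor
      · intro y₁ y₂ h12
        by_cases h1 : (y₁ : GenBaire κ) ∈ W <;> by_cases h2 : (y₂ : GenBaire κ) ∈ W
        · rw [he'mem y₁ h1, he'mem y₂ h2] at h12
          have hveq := congrArg (Subtype.val : ↥C → GenBaire κ) h12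
          have hPeq : φ ⟨(y₁ : GenBaire κ), h1⟩ = φ ⟨(y₂ : GenBaire κ), h2⟩ :=
            Subtype.ext hveq
          have hWeq := φ.injective hPeq
          have h3 := congrArg (Subtype.val : ↥W → GenBaire κ) hWeq
          exact Subtype.ext h3
        · exfalso
          have hv1 : ((e' y₁ : ↥C) : GenBaire κ) ∈ P := by
            rw [he'mem y₁ h1]
            exact (φ ⟨(y₁ : GenBaire κ), h1⟩).2
          have hv2 := he'W y₂ h2
          rw [h12, hv2] at hv1
          exact h2 (Set.mem_union_left B hv1)
        · exfalso
          have hv2 : ((e' y₂ : ↥C) : GenBaire κ) ∈ P := by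
            rw [he'mem y₂ h2]
            exact (φ ⟨(y₂ : GenBaire κ), h2⟩).2
          have hv1 := he'W y₁ h1
          rw [← h12, hv1] at hv2
          exact h1 (Set.mem_union_left B hv2)
        · have := congrArg Subtype.val h12
          rw [he'W y₁ h1, he'W y₂ h2] at this
          exact Subtype.ext this
      · intro x
        by_cases hx : (x : GenBaire κ) ∈ P
        · set w : ↥W := φ.symm ⟨(x : GenBaire κ), hx⟩ with hwdef
          refine ⟨⟨(w : GenBaire κ), hWC' w.2⟩, ?_⟩
          have hwW : ((⟨(w : GenBaire κ), hWC' w.2⟩ : ↥C') : GenBaire κ) ∈ W := w.2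
          rw [he'mem _ hwW]
          apply Subtype.ext
          show ((φ ⟨(w : GenBaire κ), hwW⟩ : ↥P) : GenBaire κ) = (x : GenBaire κ)
          have h1 : (⟨(w : GenBaire κ), hwW⟩ : ↥W) = w := Subtype.ext rfl
          rw [h1, hwdef, φ.apply_symm_apply]
        · have hxW : (x : GenBaire κ) ∉ W := by
            intro h
            rcases h with h | h
            · exact hx h
            · exact bset_inter_eq_empty _ h x.2
          exact ⟨⟨(x : GenBaire κ), Or.inl x.2⟩, Subtype.ext (he'W _ hxW)⟩
    set E := Equiv.ofBijective e' hbij with hEdef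
    refine ⟨C', ⟨hatTree κ C z, isSuperclosedTree_hatTree C z, hBody.symm⟩, E.symm, ?_, ?_⟩
    · intro S hS
      have hKC' : KBorel κ C' := KBorel.of_isClosed' hC'closed
      refine kborel_transfer hκ hKC' (f := ⇑E.symm) hWκ ?_ hS
      intro x hx
      have hfix : e' ⟨(x : GenBaire κ), Or.inl x.2⟩ = x := Subtype.ext (he'W _ hx)
      have h2 : E.symm x = ⟨(x : GenBaire κ), Or.inl x.2⟩ :=
        (Equiv.symm_apply_eq E).mpr hfix.symm
      rw [h2]
    · intro S hS
      have hKC : KBorel κ C := KBorel.of_isClosed' hC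
      have hgoal : KBorel κ (⇑E ⁻¹' S) := by
        refine kborel_transfer hκ hKC (f := ⇑E) hWκ ?_ hS
        intro y hy
        exact he'W y hy
      simpa using hgoal

end GDST
end

section
/- Let X be a nonempty κ-additive SC_κ-space which is κ-perfect. Then there is a closed subset C ⊆ X such that C with the subspace topology is homeomorphic to the generalized Cantor space 2^κ. -/
universe u v

open Cardinal Set

namespace GDST

/-! ### Auxiliary development for Statement 11 -/

section Stmt11Aux
set_option linter.unusedSectionVars false

open TopologicalSpace

variable {κ : Cardinal.{u}} {X : Type u} [TopologicalSpace X]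

/-- The well-founded `<` relation on `κ.ord.ToType`. -/
lemma wfIota (κ : Cardinal.{u}) :
    WellFounded ((· < ·) : κ.ord.ToType → κ.ord.ToType → Prop) :=
  IsWellFounded.wf

lemma exists_gt_iota (hunc : ℵ₀ < κ) (a : κ.ord.ToType) : ∃ b, a < b := by
  haveI : NoMaxOrder κ.ord.ToType := Cardinal.noMaxOrder hunc.le
  exact exists_gt a

/-- The successor of an element of `κ.ord.ToType`. -/
noncomputable def nxt (hunc : ℵ₀ < κ) (a : κ.ord.ToType) : κ.ord.ToType :=
  (wfIota κ).min {b | a < b} (exists_gt_iota hunc a)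

lemma lt_nxt (hunc : ℵ₀ < κ) (a : κ.ord.ToType) : a < nxt hunc a :=
  (wfIota κ).min_mem {b | a < b} (exists_gt_iota hunc a)

lemma lt_nxt_iff (hunc : ℵ₀ < κ) {a b : κ.ord.ToType} : b < nxt hunc a ↔ b ≤ a := by
  constructor
  · intro h
    by_contra hb
    exact (wfIota κ).not_lt_min {b | a < b} (lt_of_not_ge hb) h
  · exact fun h => lt_of_le_of_lt h (lt_nxt hunc a)

/-- Case analysis on elements of a linear order: minimal, successor, or limit. -/
lemma iota_cases (a : κ.ord.ToType) :
    (∀ b, ¬ b < a) ∨ (∃ b, b < a ∧ ∀ c, c < a → c ≤ b) ∨ IsLimitElt a := by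
  by_cases h1 : ∃ b, b < a
  · by_cases h2 : ∀ b, b < a → ∃ c, b < c ∧ c < a
    · exact Or.inr (Or.inr ⟨h1, h2⟩)
    · push_neg at h2
      obtain ⟨b, hb, hmax⟩ := h2
      exact Or.inr (Or.inl ⟨b, hb, fun c hc => by
        by_contra hbc
        exact absurd hc (not_lt.2 (hmax c (lt_of_not_ge hbc)))⟩)
  · exact Or.inl fun b hb => h1 ⟨b, hb⟩

lemma InterBelow_congr {ι : Type u} [LT ι] {V W : ι → Set X} {a : ι}
    (h : ∀ b, b < a → V b = W b) : InterBelow V a = InterBelow W a := by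
  unfold InterBelow
  exact Set.iInter_congr fun b => by
    by_cases hb : b < a
    · simp [hb, h b hb]
    · simp [hb]

lemma InterBelow_eq_sInter {ι : Type u} [LT ι] (V : ι → Set X) (a : ι) :
    InterBelow V a = ⋂₀ (V '' {b | b < a}) := by
  rw [Set.sInter_image]; rfl

lemma mem_InterBelow {ι : Type u} [LT ι] {V : ι → Set X} {a : ι} {z : X} :
    z ∈ InterBelow V a ↔ ∀ b, b < a → z ∈ V b := by
  simp [InterBelow]

lemma InterBelow_subset {ι : Type u} [LT ι] {V : ι → Set X} {a b : ι} (h : b < a) :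
    InterBelow V a ⊆ V b := fun _ hz => mem_InterBelow.1 hz b h

/-- A nonempty intersection of fewer than `κ` open sets contains two points. -/
lemma exists_two_points (hperf : KPerfect κ X) {S : Set (Set X)} (hcard : #S < κ)
    (hop : ∀ U ∈ S, IsOpen U) (hne : (⋂₀ S).Nonempty) :
    ∃ p ∈ ⋂₀ S, ∃ q ∈ ⋂₀ S, p ≠ q := by
  by_contra h
  push_neg at h
  obtain ⟨p, hp⟩ := hne
  refine hperf p ⟨S, hcard, hop, ?_⟩
  ext q
  simp only [Set.mem_singleton_iff]
  exact ⟨fun hq => (h p hp q hq).symm, fun hq => hq ▸ hp⟩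

/-- A good pair of moves for player I inside `Q`. -/
def GoodPair (Q : Set X) (m : (Set X × X) × (Set X × X)) : Prop :=
  m.1.2 ∈ m.1.1 ∧ m.2.2 ∈ m.2.1 ∧ IsOpen m.1.1 ∧ IsOpen m.2.1 ∧
    closure m.1.1 ∩ closure m.2.1 = ∅ ∧ closure m.1.1 ⊆ Q ∧ closure m.2.1 ⊆ Q

open Classical in
noncomputable def pickPair (pt : X) (Q : Set X) : (Set X × X) × (Set X × X) :=
  if h : ∃ m, GoodPair Q m then h.choose else ((Set.univ, pt), (Set.univ, pt))

lemma pickPair_good {pt : X} {Q : Set X} (h : ∃ m, GoodPair Q m) :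
    GoodPair Q (pickPair pt Q) := by
  unfold pickPair
  rw [dif_pos h]
  exact h.choose_spec

/-- Existence of a good pair in a nonempty `<κ`-intersection of open sets,
in a `T2` regular `κ`-perfect `κ`-additive space. -/
lemma exists_goodPair [T2Space X] [RegularSpace X] (hperf : KPerfect κ X)
    {S : Set (Set X)} (hcard : #S < κ) (hop : ∀ U ∈ S, IsOpen U)
    (hne : (⋂₀ S).Nonempty) (hQopen : IsOpen (⋂₀ S)) :
    ∃ m, GoodPair (⋂₀ S) m := by
  obtain ⟨p, hp, q, hq, hpq⟩ := exists_two_points hperf hcard hop hne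
  obtain ⟨O0, O1, hO0, hO1, hpO0, hqO1, hdisj⟩ := t2_separation hpq
  have h0 : (⋂₀ S) ∩ O0 ∈ nhds p := ((hQopen.inter hO0).mem_nhds ⟨hp, hpO0⟩)
  have h1 : (⋂₀ S) ∩ O1 ∈ nhds q := ((hQopen.inter hO1).mem_nhds ⟨hq, hqO1⟩)
  obtain ⟨t0, ht0n, ht0c, ht0s⟩ := exists_mem_nhds_isClosed_subset h0
  obtain ⟨t1, ht1n, ht1c, ht1s⟩ := exists_mem_nhds_isClosed_subset h1
  refine ⟨((interior t0, p), (interior t1, q)), mem_interior_iff_mem_nhds.2 ht0n,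
    mem_interior_iff_mem_nhds.2 ht1n, isOpen_interior, isOpen_interior, ?_, ?_, ?_⟩
  · have c0 : closure (interior t0) ⊆ O0 :=
      (closure_minimal interior_subset ht0c).trans (ht0s.trans Set.inter_subset_right)
    have c1 : closure (interior t1) ⊆ O1 :=
      (closure_minimal interior_subset ht1c).trans (ht1s.trans Set.inter_subset_right)
    rw [← Set.subset_empty_iff]
    intro w ⟨hw0, hw1⟩
    exact Set.disjoint_iff.1 hdisj ⟨c0 hw0, c1 hw1⟩
  · exact (closure_minimal interior_subset ht0c).trans (ht0s.trans Set.inter_subset_left)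
  · exact (closure_minimal interior_subset ht1c).trans (ht1s.trans Set.inter_subset_left)

/-! The recursive construction of I's moves along each branch. -/

variable (σ : Strategy κ X) (e : κ.ord.ToType → Set X) (pt : X)

open Classical in
/-- The body of the recursion: given the moves at all earlier rounds on all branches,
the move of player I at round `a` on branch `x`. -/
noncomputable def DmvBody (a : κ.ord.ToType)
    (IH : ∀ b, b < a → ((κ.ord.ToType → Bool) → Set X × X))
    (x : κ.ord.ToType → Bool) : Set X × X :=
  let fb : IMoves κ X := fun b => if h : b < a then IH b h x else (Set.univ, pt)
  let P : Set X := InterBelow (σ fb) a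
  let Q : Set X := if (P ∩ e a).Nonempty then P ∩ e a else P
  if x a then (pickPair pt Q).2 else (pickPair pt Q).1

/-- Player I's move at round `a` on branch `x`. -/
noncomputable def Dmv : κ.ord.ToType → (κ.ord.ToType → Bool) → Set X × X :=
  (wfIota κ).fix (DmvBody σ e pt)

/-- The full run of I's moves along branch `x`. -/
noncomputable def Frun (x : κ.ord.ToType → Bool) : IMoves κ X := fun a => Dmv σ e pt a x

/-- The intersection of II's moves before round `a` on branch `x`. -/
noncomputable def Pst (a : κ.ord.ToType) (x : κ.ord.ToType → Bool) : Set X :=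
  InterBelow (σ (Frun σ e pt x)) a

open Classical in
/-- The target set at round `a` on branch `x`. -/
noncomputable def Qst (a : κ.ord.ToType) (x : κ.ord.ToType → Bool) : Set X :=
  if (Pst σ e pt a x ∩ e a).Nonempty then Pst σ e pt a x ∩ e a else Pst σ e pt a x

lemma DmvBody_eq_of (hσ : IsIIStrategy σ) {a : κ.ord.ToType} {x : κ.ord.ToType → Bool}
    (IH : ∀ b, b < a → ((κ.ord.ToType → Bool) → Set X × X))
    (hIH : ∀ b (h : b < a), IH b h x = Frun σ e pt x b) :
    DmvBody σ e pt a IH x =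
      if x a then (pickPair pt (Qst σ e pt a x)).2 else (pickPair pt (Qst σ e pt a x)).1 := by
  have hP : InterBelow (σ fun b => if h : b < a then IH b h x else (Set.univ, pt)) a
      = Pst σ e pt a x := by
    refine InterBelow_congr fun b hb => hσ _ _ b fun c hc => ?_
    show (if h : c < a then IH c h x else (Set.univ, pt)) = Frun σ e pt x c
    rw [dif_pos (lt_of_le_of_lt hc hb)]
    exact hIH c _
  simp only [DmvBody]
  rw [hP]
  rfl

lemma Dmv_eq (hσ : IsIIStrategy σ) (a : κ.ord.ToType) (x : κ.ord.ToType → Bool) :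
    Dmv σ e pt a x =
      if x a then (pickPair pt (Qst σ e pt a x)).2 else (pickPair pt (Qst σ e pt a x)).1 := by
  have h1 : Dmv σ e pt a = DmvBody σ e pt a fun b _ => Dmv σ e pt b :=
    WellFounded.fix_eq (wfIota κ) (DmvBody σ e pt) a
  rw [congrFun h1 x]
  exact DmvBody_eq_of σ e pt hσ _ (fun b h => rfl)

lemma Qst_subset_Pst (a : κ.ord.ToType) (x : κ.ord.ToType → Bool) :
    Qst σ e pt a x ⊆ Pst σ e pt a x := by
  unfold Qst; split
  · exact Set.inter_subset_left
  · exact le_refl _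

lemma Pst_subset_V {a b : κ.ord.ToType} (h : b < a) (x : κ.ord.ToType → Bool) :
    Pst σ e pt a x ⊆ σ (Frun σ e pt x) b :=
  InterBelow_subset h

/-- Coherence: the moves only depend on the branch up to the current round. -/
lemma Dmv_coh (hσ : IsIIStrategy σ) :
    ∀ a : κ.ord.ToType, ∀ x y, (∀ b, b ≤ a → x b = y b) →
      Dmv σ e pt a x = Dmv σ e pt a y := by
  intro a
  refine (wfIota κ).induction (C := fun a => ∀ x y, (∀ b, b ≤ a → x b = y b) →
    Dmv σ e pt a x = Dmv σ e pt a y) a ?_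
  intro a IH x y hxy
  have hp : Pst σ e pt a x = Pst σ e pt a y := by
    refine InterBelow_congr fun b hb => hσ _ _ b fun c hc => ?_
    exact IH c (lt_of_le_of_lt hc hb) x y
      (fun d hd => hxy d (hd.trans (le_of_lt (lt_of_le_of_lt hc hb))))
  have hq : Qst σ e pt a x = Qst σ e pt a y := by
    unfold Qst; rw [hp]
  rw [Dmv_eq σ e pt hσ a x, Dmv_eq σ e pt hσ a y, hq, hxy a le_rfl]

lemma Frun_coh (hσ : IsIIStrategy σ) {a : κ.ord.ToType} {x y : κ.ord.ToType → Bool}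
    (h : ∀ b, b ≤ a → x b = y b) : ∀ c, c ≤ a → Frun σ e pt x c = Frun σ e pt y c :=
  fun c hc => Dmv_coh σ e pt hσ c x y (fun b hb => h b (hb.trans hc))

lemma V_coh (hσ : IsIIStrategy σ) {a : κ.ord.ToType} {x y : κ.ord.ToType → Bool}
    (h : ∀ b, b ≤ a → x b = y b) : σ (Frun σ e pt x) a = σ (Frun σ e pt y) a :=
  hσ _ _ a (Frun_coh σ e pt hσ h)

lemma Pst_coh (hσ : IsIIStrategy σ) {a : κ.ord.ToType} {x y : κ.ord.ToType → Bool}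
    (h : ∀ b, b < a → x b = y b) : Pst σ e pt a x = Pst σ e pt a y :=
  InterBelow_congr fun b hb => V_coh σ e pt hσ (fun c hc => h c (lt_of_le_of_lt hc hb))

lemma Qst_coh (hσ : IsIIStrategy σ) {a : κ.ord.ToType} {x y : κ.ord.ToType → Bool}
    (h : ∀ b, b < a → x b = y b) : Qst σ e pt a x = Qst σ e pt a y := by
  unfold Qst; rw [Pst_coh σ e pt hσ h]

lemma Pst_eq_univ {a : κ.ord.ToType} (h : ∀ b, ¬ b < a) (x : κ.ord.ToType → Bool) :
    Pst σ e pt a x = Set.univ :=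
  Set.eq_univ_iff_forall.2 fun _ => mem_InterBelow.2 fun b hb => absurd hb (h b)

variable [T2Space X] [RegularSpace X]

/-- The main invariant of the construction, proved by transfinite induction. -/
lemma inv (hwin : WinningStrong σ) (hadd : KAdditive κ X) (hperf : KPerfect κ X)
    (hunc : ℵ₀ < κ) (he : ∀ j, IsOpen (e j)) :
    ∀ (a : κ.ord.ToType) (x : κ.ord.ToType → Bool),
      IsOpen (Pst σ e pt a x) ∧ (Pst σ e pt a x).Nonempty ∧
      (∃ m, GoodPair (Qst σ e pt a x) m) ∧
      LegalI σ (Frun σ e pt x) a ∧ LegalII σ (Frun σ e pt x) a := by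
  have hσ := hwin.1
  intro a
  refine (wfIota κ).induction (C := fun a => ∀ x : κ.ord.ToType → Bool,
      IsOpen (Pst σ e pt a x) ∧ (Pst σ e pt a x).Nonempty ∧
      (∃ m, GoodPair (Qst σ e pt a x) m) ∧
      LegalI σ (Frun σ e pt x) a ∧ LegalII σ (Frun σ e pt x) a) a ?_
  intro a IH x
  have hVopen : ∀ b, b < a → IsOpen (σ (Frun σ e pt x) b) := by
    intro b hb
    obtain ⟨W, hW, hEq⟩ := ((IH b hb x).2.2.2.2).1
    rw [hEq]
    exact hW.inter (IH b hb x).1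
  have hLB : LegalBelow σ (Frun σ e pt x) a := fun b hb =>
    ⟨(IH b hb x).2.2.2.1, (IH b hb x).2.2.2.2⟩
  have hPopen : IsOpen (Pst σ e pt a x) := by
    rw [show Pst σ e pt a x = ⋂₀ ((σ (Frun σ e pt x)) '' {b | b < a}) from
      InterBelow_eq_sInter _ _]
    refine hadd _ (lt_of_le_of_lt Cardinal.mk_image_le (mk_Iio_toType_ord_lt a)) ?_
    rintro U ⟨b, hb, rfl⟩
    exact hVopen b hb
  have hVsubQ : ∀ b, b < a → σ (Frun σ e pt x) b ⊆ Qst σ e pt b x := by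
    intro b hb
    have hg := pickPair_good (pt := pt) (IH b hb x).2.2.1
    have hsub : σ (Frun σ e pt x) b ⊆ (Frun σ e pt x b).1 := ((IH b hb x).2.2.2.2).2.2
    have hcl : closure ((Frun σ e pt x b).1) ⊆ Qst σ e pt b x := by
      have hfb : Frun σ e pt x b = if x b then (pickPair pt (Qst σ e pt b x)).2
          else (pickPair pt (Qst σ e pt b x)).1 := Dmv_eq σ e pt hσ b x
      rw [hfb]
      cases hxb : x b
      · rw [if_neg Bool.false_ne_true]
        exact hg.2.2.2.2.2.1
      · rw [if_pos rfl]
        exact hg.2.2.2.2.2.2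
    exact fun z hz => hcl (subset_closure (hsub hz))
  have hVsubP : ∀ b, b < a → σ (Frun σ e pt x) b ⊆ Pst σ e pt b x := fun b hb =>
    (hVsubQ b hb).trans (Qst_subset_Pst σ e pt b x)
  have hPne : (Pst σ e pt a x).Nonempty := by
    rcases iota_cases a with hmin | ⟨b, hb, hmax⟩ | hlim
    · exact ⟨pt, by rw [Pst_eq_univ σ e pt hmin x]; trivial⟩
    · refine ⟨(Frun σ e pt x b).2, mem_InterBelow.2 fun c hc => ?_⟩
      have hmem : (Frun σ e pt x b).2 ∈ σ (Frun σ e pt x) b := ((IH b hb x).2.2.2.2).2.1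
      rcases eq_or_lt_of_le (hmax c hc) with rfl | hcb
      · exact hmem
      · exact InterBelow_subset hcb (hVsubP b hb hmem)
    · exact hwin.2.2.1 (Frun σ e pt x) a hlim hLB
  have hQgood : ∃ m, GoodPair (Qst σ e pt a x) m := by
    by_cases hcase : (Pst σ e pt a x ∩ e a).Nonempty
    · have hQ : Qst σ e pt a x = ⋂₀ (insert (e a) ((σ (Frun σ e pt x)) '' {b | b < a})) := by
        rw [Set.sInter_insert, ← InterBelow_eq_sInter]
        unfold Qst
        rw [if_pos hcase]
        exact Set.inter_comm _ _
      rw [hQ]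
      refine exists_goodPair hperf ?_ ?_ ?_ ?_
      · refine lt_of_le_of_lt Cardinal.mk_insert_le ?_
        exact Cardinal.add_lt_of_lt hunc.le
          (lt_of_le_of_lt Cardinal.mk_image_le (mk_Iio_toType_ord_lt a))
          (one_lt_aleph0.trans hunc)
      · intro U hU
        rcases Set.mem_insert_iff.1 hU with rfl | ⟨b, hb, rfl⟩
        · exact he a
        · exact hVopen b hb
      · rw [← hQ]
        unfold Qst
        rwa [if_pos hcase]
      · rw [← hQ]
        unfold Qst
        rw [if_pos hcase]
        exact hPopen.inter (he a)
    · have hQ2 : Qst σ e pt a x = ⋂₀ ((σ (Frun σ e pt x)) '' {b | b < a}) := by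
        unfold Qst
        rw [if_neg hcase]
        exact InterBelow_eq_sInter _ _
      rw [hQ2]
      refine exists_goodPair hperf
        (lt_of_le_of_lt Cardinal.mk_image_le (mk_Iio_toType_ord_lt a)) ?_ ?_ ?_
      · rintro U ⟨b, hb, rfl⟩
        exact hVopen b hb
      · rw [← hQ2]
        unfold Qst
        rwa [if_neg hcase]
      · rw [← hQ2]
        unfold Qst
        rwa [if_neg hcase]
  have hg := pickPair_good (pt := pt) hQgood
  have hFa : Frun σ e pt x a =
      if x a then (pickPair pt (Qst σ e pt a x)).2 else (pickPair pt (Qst σ e pt a x)).1 :=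
    Dmv_eq σ e pt hσ a x
  have hU1sub : (Frun σ e pt x a).1 ⊆ Pst σ e pt a x := by
    rw [hFa]
    cases hxa : x a
    · rw [if_neg Bool.false_ne_true]
      exact fun z hz => Qst_subset_Pst σ e pt a x (hg.2.2.2.2.2.1 (subset_closure hz))
    · rw [if_pos rfl]
      exact fun z hz => Qst_subset_Pst σ e pt a x (hg.2.2.2.2.2.2 (subset_closure hz))
  have hLI : LegalI σ (Frun σ e pt x) a := by
    constructor
    · refine ⟨(Frun σ e pt x a).1, ?_, (Set.inter_eq_self_of_subset_left hU1sub).symm⟩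
      rw [hFa]
      cases hxa : x a
      · rw [if_neg Bool.false_ne_true]
        exact hg.2.2.1
      · rw [if_pos rfl]
        exact hg.2.2.2.1
    · rw [hFa]
      cases hxa : x a
      · rw [if_neg Bool.false_ne_true]
        exact hg.1
      · rw [if_pos rfl]
        exact hg.2.1
  have hLII : LegalII σ (Frun σ e pt x) a := hwin.2.1 (Frun σ e pt x) a hLB hLI
  exact ⟨hPopen, hPne, hQgood, hLI, hLII⟩

lemma clV_subset_Qst (hwin : WinningStrong σ) (hadd : KAdditive κ X) (hperf : KPerfect κ X)
    (hunc : ℵ₀ < κ) (he : ∀ j, IsOpen (e j)) (a : κ.ord.ToType) (x : κ.ord.ToType → Bool) :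
    closure (σ (Frun σ e pt x) a) ⊆ Qst σ e pt a x := by
  have hg := pickPair_good (pt := pt) (inv σ e pt hwin hadd hperf hunc he a x).2.2.1
  have hsub : σ (Frun σ e pt x) a ⊆ (Frun σ e pt x a).1 :=
    ((inv σ e pt hwin hadd hperf hunc he a x).2.2.2.2).2.2
  have hfb : Frun σ e pt x a = if x a then (pickPair pt (Qst σ e pt a x)).2
      else (pickPair pt (Qst σ e pt a x)).1 := Dmv_eq σ e pt hwin.1 a x
  refine (closure_mono hsub).trans ?_
  rw [hfb]
  cases hxa : x a
  · rw [if_neg Bool.false_ne_true]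
    exact hg.2.2.2.2.2.1
  · rw [if_pos rfl]
    exact hg.2.2.2.2.2.2

lemma V_subset_Pst (hwin : WinningStrong σ) (hadd : KAdditive κ X) (hperf : KPerfect κ X)
    (hunc : ℵ₀ < κ) (he : ∀ j, IsOpen (e j)) (a : κ.ord.ToType) (x : κ.ord.ToType → Bool) :
    σ (Frun σ e pt x) a ⊆ Pst σ e pt a x := fun z hz =>
  Qst_subset_Pst σ e pt a x
    (clV_subset_Qst σ e pt hwin hadd hperf hunc he a x (subset_closure hz))

lemma sib (hwin : WinningStrong σ) (hadd : KAdditive κ X) (hperf : KPerfect κ X)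
    (hunc : ℵ₀ < κ) (he : ∀ j, IsOpen (e j)) {a : κ.ord.ToType} {x y : κ.ord.ToType → Bool}
    (hagree : ∀ b, b < a → x b = y b) (hne : x a ≠ y a) :
    closure (σ (Frun σ e pt x) a) ∩ closure (σ (Frun σ e pt y) a) = ∅ := by
  have hg := pickPair_good (pt := pt) (inv σ e pt hwin hadd hperf hunc he a x).2.2.1
  have hQ : Qst σ e pt a y = Qst σ e pt a x :=
    Qst_coh σ e pt hwin.1 (fun b hb => (hagree b hb).symm)
  have hsubx : σ (Frun σ e pt x) a ⊆ (Frun σ e pt x a).1 :=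
    ((inv σ e pt hwin hadd hperf hunc he a x).2.2.2.2).2.2
  have hsuby : σ (Frun σ e pt y) a ⊆ (Frun σ e pt y a).1 :=
    ((inv σ e pt hwin hadd hperf hunc he a y).2.2.2.2).2.2
  have hfx : Frun σ e pt x a = if x a then (pickPair pt (Qst σ e pt a x)).2
      else (pickPair pt (Qst σ e pt a x)).1 := Dmv_eq σ e pt hwin.1 a x
  have hfy : Frun σ e pt y a = if y a then (pickPair pt (Qst σ e pt a y)).2
      else (pickPair pt (Qst σ e pt a y)).1 := Dmv_eq σ e pt hwin.1 a y
  rw [hQ] at hfy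
  rw [← Set.subset_empty_iff]
  cases hxa : x a <;> cases hya : y a
  · exact absurd (hxa.trans hya.symm) hne
  · have c1 : (Frun σ e pt x a).1 ⊆ (pickPair pt (Qst σ e pt a x)).1.1 := by
      rw [hfx, hxa, if_neg Bool.false_ne_true]
    have c2 : (Frun σ e pt y a).1 ⊆ (pickPair pt (Qst σ e pt a x)).2.1 := by
      rw [hfy, hya, if_pos rfl]
    intro w hw
    rw [← hg.2.2.2.2.1]
    exact ⟨closure_mono (hsubx.trans c1) hw.1, closure_mono (hsuby.trans c2) hw.2⟩
  · have c1 : (Frun σ e pt x a).1 ⊆ (pickPair pt (Qst σ e pt a x)).2.1 := by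
      rw [hfx, hxa, if_pos rfl]
    have c2 : (Frun σ e pt y a).1 ⊆ (pickPair pt (Qst σ e pt a x)).1.1 := by
      rw [hfy, hya, if_neg Bool.false_ne_true]
    intro w hw
    rw [← hg.2.2.2.2.1]
    exact ⟨closure_mono (hsuby.trans c2) hw.2, closure_mono (hsubx.trans c1) hw.1⟩
  · exact absurd (hxa.trans hya.symm) hne

lemma branch_eq (hwin : WinningStrong σ) (hadd : KAdditive κ X) (hperf : KPerfect κ X)
    (hunc : ℵ₀ < κ) (he : ∀ j, IsOpen (e j)) {a : κ.ord.ToType} {x y : κ.ord.ToType → Bool}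
    {z : X} (hz : z ∈ Pst σ e pt a x) (hzy : ∀ c, z ∈ σ (Frun σ e pt y) c) :
    ∀ c, c < a → y c = x c := by
  intro c
  refine (wfIota κ).induction (C := fun c => c < a → y c = x c) c ?_
  intro c IH hc
  by_contra hne
  have hagree : ∀ b, b < c → x b = y b := fun b hb => (IH b hb (hb.trans hc)).symm
  have hdisj := sib σ e pt hwin hadd hperf hunc he hagree (fun h => hne h.symm)
  have h1 : z ∈ closure (σ (Frun σ e pt x) c) :=
    subset_closure (Pst_subset_V σ e pt hc x hz)
  have h2 : z ∈ closure (σ (Frun σ e pt y) c) := subset_closure (hzy c)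
  exact absurd (hdisj ▸ Set.mem_inter h1 h2) (Set.notMem_empty z)

lemma branch_eq' (hwin : WinningStrong σ) (hadd : KAdditive κ X) (hperf : KPerfect κ X)
    (hunc : ℵ₀ < κ) (he : ∀ j, IsOpen (e j)) {a : κ.ord.ToType} {x y : κ.ord.ToType → Bool}
    {z : X} (hz : z ∈ σ (Frun σ e pt x) a) (hzy : ∀ c, z ∈ σ (Frun σ e pt y) c) :
    ∀ c, c ≤ a → y c = x c := by
  have hlt : ∀ c, c < a → y c = x c := branch_eq σ e pt hwin hadd hperf hunc he
    (V_subset_Pst σ e pt hwin hadd hperf hunc he a x hz) hzy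
  intro c hc
  rcases lt_or_eq_of_le hc with h | rfl
  · exact hlt c h
  · by_contra hne
    have hdisj := sib σ e pt hwin hadd hperf hunc he
      (fun b hb => (hlt b hb).symm) (fun h => hne h.symm)
    exact absurd (hdisj ▸ Set.mem_inter (subset_closure hz) (subset_closure (hzy c)))
      (Set.notMem_empty z)

lemma V_subset_e (hwin : WinningStrong σ) (hadd : KAdditive κ X) (hperf : KPerfect κ X)
    (hunc : ℵ₀ < κ) (he : ∀ j, IsOpen (e j)) {a : κ.ord.ToType} {x : κ.ord.ToType → Bool}
    (hcase : (Pst σ e pt a x ∩ e a).Nonempty) :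
    σ (Frun σ e pt x) a ⊆ e a := by
  have h := clV_subset_Qst σ e pt hwin hadd hperf hunc he a x
  unfold Qst at h
  rw [if_pos hcase] at h
  exact fun z hz => (h (subset_closure hz)).2

open Classical in
/-- The branch approximating a point `z` in the closure of the Cantor scheme. -/
noncomputable def zbr (Cs : Set X) (z : X) : κ.ord.ToType → Bool :=
  (wfIota κ).fix fun a IH =>
    if z ∈ closure (Cs ∩ σ (Frun σ e pt (fun b => if h : b < a then IH b h else true)) a)
    then true else false

open Classical in
lemma zbr_eq (Cs : Set X) (z : X) (a : κ.ord.ToType) :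
    zbr σ e pt Cs z a =
      if z ∈ closure (Cs ∩ σ (Frun σ e pt
          (fun b => if _ : b < a then zbr σ e pt Cs z b else true)) a)
      then true else false :=
  WellFounded.fix_eq (wfIota κ)
    (fun a IH =>
      if z ∈ closure (Cs ∩ σ (Frun σ e pt (fun b => if h : b < a then IH b h else true)) a)
      then true else false) a

lemma mem_closure_inter_open {z : X} {S O : Set X} (hS : z ∈ closure S) (hO : IsOpen O)
    (hzO : z ∈ O) : z ∈ closure (S ∩ O) := by
  rw [mem_closure_iff] at hS ⊢
  intro U hU hzU
  obtain ⟨w, hw⟩ := hS (U ∩ O) (hU.inter hO) ⟨hzU, hzO⟩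
  exact ⟨w, hw.1.1, hw.2, hw.1.2⟩

end Stmt11Aux
/-- a nonempty κ-perfect κ-additive SC_κ-space contains a closed homeomorphic
copy of the generalized Cantor space. -/
theorem stmt_11 (κ : Cardinal.{u}) (hreg : κ.IsRegular) (hunc : ℵ₀ < κ)
    (hpow : (2 : Cardinal.{u}) ^< κ = κ)
    (X : Type u) [TopologicalSpace X] [T2Space X] [RegularSpace X]
    (hne : Nonempty X) (hadd : KAdditive κ X) (hsc : SCSpace κ X) (hperf : KPerfect κ X) :
    ∃ C : Set X, IsClosed C ∧ Nonempty (↥C ≃ₜ GenCantor κ) := by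
  classical
  obtain ⟨⟨B, hBbasis, hBcard⟩, σ, hwin⟩ := hsc
  have hσ := hwin.1
  obtain ⟨pt⟩ := hne
  -- a κ-sized enumeration of a basis
  obtain ⟨e, he, hbase⟩ : ∃ e : κ.ord.ToType → Set X, (∀ j, IsOpen (e j)) ∧
      ∀ W, IsOpen W → ∀ z ∈ W, ∃ j, z ∈ e j ∧ e j ⊆ W := by
    have hBne : B.Nonempty := by
      obtain ⟨t, htB, _, _⟩ := hBbasis.exists_subset_of_mem_open (Set.mem_univ pt) isOpen_univ
      exact ⟨t, htB⟩
    have hcard' : #↥B ≤ #(κ.ord.ToType) := by rw [mk_ord_toType]; exact hBcard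
    obtain ⟨f⟩ := Cardinal.le_def _ _ |>.1 hcard'
    haveI : Nonempty ↥B := hBne.to_subtype
    have hgsurj : Function.Surjective (Function.invFun (⇑f)) :=
      Function.invFun_surjective f.injective
    refine ⟨fun j => ((Function.invFun (⇑f) j : ↥B) : Set X),
      fun j => hBbasis.isOpen (Function.invFun (⇑f) j).2, ?_⟩
    intro W hW z hz
    obtain ⟨t, htB, hzt, htW⟩ := hBbasis.exists_subset_of_mem_open hz hW
    obtain ⟨j, hj⟩ := hgsurj ⟨t, htB⟩
    refine ⟨j, ?_, ?_⟩
    · simp only [hj]; exact hzt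
    · simp only [hj]; exact htW
  have hinv := inv σ e pt hwin hadd hperf hunc he
  have hlegal : ∀ x : κ.ord.ToType → Bool, ∀ a,
      LegalI σ (Frun σ e pt x) a ∧ LegalII σ (Frun σ e pt x) a :=
    fun x a => ⟨(hinv a x).2.2.2.1, (hinv a x).2.2.2.2⟩
  have hINT : ∀ x : κ.ord.ToType → Bool, (⋂ a, σ (Frun σ e pt x) a).Nonempty :=
    fun x => hwin.2.2.2 (Frun σ e pt x) (hlegal x)
  choose hm hmspec using hINT
  have hmem : ∀ x a, hm x ∈ σ (Frun σ e pt x) a := fun x a => Set.mem_iInter.1 (hmspec x) a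
  have hmemP : ∀ x a, hm x ∈ Pst σ e pt a x := fun x a =>
    mem_InterBelow.2 fun b _ => hmem x b
  -- small neighborhoods along branches
  have hsmall : ∀ x W, IsOpen W → hm x ∈ W → ∃ a, σ (Frun σ e pt x) a ⊆ W := by
    intro x W hW hxW
    obtain ⟨j, hj1, hj2⟩ := hbase W hW _ hxW
    exact ⟨j, (V_subset_e σ e pt hwin hadd hperf hunc he ⟨hm x, hmemP x j, hj1⟩).trans hj2⟩
  -- injectivity
  have hinj : Function.Injective hm := by
    intro x y hxy
    by_contra hne'
    have hA : {a | x a ≠ y a}.Nonempty := by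
      by_contra h
      exact hne' (funext fun a => not_not.1 fun hc => h ⟨a, hc⟩)
    have hamem : x ((wfIota κ).min _ hA) ≠ y ((wfIota κ).min _ hA) :=
      (wfIota κ).min_mem _ hA
    have hagree : ∀ b, b < (wfIota κ).min _ hA → x b = y b := by
      intro b hb
      by_contra hc
      exact (wfIota κ).not_lt_min _ hc hb
    have hdisj := sib σ e pt hwin hadd hperf hunc he hagree hamem
    have h2 : hm x ∈ closure (σ (Frun σ e pt y) ((wfIota κ).min _ hA)) := by
      rw [hxy]; exact subset_closure (hmem y _)
    exact absurd (hdisj ▸ Set.mem_inter (subset_closure (hmem x _)) h2)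
      (Set.notMem_empty _)
  -- the intersection along a branch is a singleton
  have hsingle : ∀ (x : κ.ord.ToType → Bool) z, (∀ a, z ∈ σ (Frun σ e pt x) a) → z = hm x := by
    intro x z hz
    by_contra hne'
    have hW : IsOpen ({z}ᶜ : Set X) := isClosed_singleton.isOpen_compl
    have hmW : hm x ∈ ({z}ᶜ : Set X) := fun h => hne' (Set.mem_singleton_iff.1 h).symm
    obtain ⟨a, haW⟩ := hsmall x _ hW hmW
    exact haW (hz a) rfl
  have hclsingle : ∀ (x : κ.ord.ToType → Bool) z,
      (∀ a, z ∈ closure (σ (Frun σ e pt x) a)) → z = hm x := by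
    intro x z hz
    refine hsingle x z fun a => ?_
    exact Pst_subset_V σ e pt (lt_nxt hunc a) x (Qst_subset_Pst σ e pt _ x
      (clV_subset_Qst σ e pt hwin hadd hperf hunc he (nxt hunc a) x (hz (nxt hunc a))))
  -- the Cantor set
  refine ⟨Set.range hm, ?_, ?_⟩
  · -- closedness
    refine closure_subset_iff_isClosed.1 fun z hz => ?_
    have claim : ∀ a, z ∈ closure (Set.range hm ∩ σ (Frun σ e pt (zbr σ e pt (Set.range hm) z)) a) := by
      intro a
      refine (wfIota κ).induction (C := fun a =>
        z ∈ closure (Set.range hm ∩ σ (Frun σ e pt (zbr σ e pt (Set.range hm) z)) a)) a ?_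
      intro a IH
      have hPclaim : z ∈ closure (Set.range hm ∩ Pst σ e pt a (zbr σ e pt (Set.range hm) z)) := by
        rcases iota_cases a with hmin | ⟨b, hb, hmax⟩ | hlim
        · rw [Pst_eq_univ σ e pt hmin _, Set.inter_univ]; exact hz
        · refine closure_mono ?_ (IH b hb)
          rintro w ⟨⟨y, rfl⟩, hw⟩
          refine ⟨⟨y, rfl⟩, mem_InterBelow.2 fun c hc => ?_⟩
          have hyx : ∀ c, c ≤ b → y c = zbr σ e pt (Set.range hm) z c :=
            branch_eq' σ e pt hwin hadd hperf hunc he hw (hmem y)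
          have hVc : σ (Frun σ e pt y) c = σ (Frun σ e pt (zbr σ e pt (Set.range hm) z)) c :=
            V_coh σ e pt hσ (fun d hd => hyx d (hd.trans (hmax c hc)))
          rw [← hVc]; exact hmem y c
        · have hzP : z ∈ Pst σ e pt a (zbr σ e pt (Set.range hm) z) := by
            refine mem_InterBelow.2 fun b hb => ?_
            obtain ⟨c, hbc, hca⟩ := hlim.2 b hb
            have hnb : nxt hunc b < a :=
              lt_of_le_of_lt (le_of_not_gt fun hcn =>
                absurd ((lt_nxt_iff hunc).1 hcn) (not_le.2 hbc)) hca
            have h2 : z ∈ closure (σ (Frun σ e pt (zbr σ e pt (Set.range hm) z)) (nxt hunc b)) :=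
              closure_mono Set.inter_subset_right (IH (nxt hunc b) hnb)
            exact Pst_subset_V σ e pt (lt_nxt hunc b) _ (Qst_subset_Pst σ e pt _ _
              (clV_subset_Qst σ e pt hwin hadd hperf hunc he _ _ h2))
          exact mem_closure_inter_open hz (hinv a _).1 hzP
      have hsplit : Set.range hm ∩ Pst σ e pt a (zbr σ e pt (Set.range hm) z) ⊆
          (Set.range hm ∩ σ (Frun σ e pt
            (fun b => if _ : b < a then zbr σ e pt (Set.range hm) z b else false)) a) ∪
          (Set.range hm ∩ σ (Frun σ e pt
            (fun b => if _ : b < a then zbr σ e pt (Set.range hm) z b else true)) a) := by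
        rintro w ⟨⟨y, rfl⟩, hP⟩
        have hyx : ∀ c, c < a → y c = zbr σ e pt (Set.range hm) z c :=
          branch_eq σ e pt hwin hadd hperf hunc he hP (hmem y)
        cases hya : y a
        · left
          refine ⟨⟨y, rfl⟩, ?_⟩
          have hVa : σ (Frun σ e pt y) a = σ (Frun σ e pt
              (fun b => if _ : b < a then zbr σ e pt (Set.range hm) z b else false)) a := by
            refine V_coh σ e pt hσ fun c hc => ?_
            rcases lt_or_eq_of_le hc with h | rfl
            · rw [hyx c h, dif_pos h]
            · rw [hya, dif_neg (lt_irrefl c)]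
          rw [← hVa]; exact hmem y a
        · right
          refine ⟨⟨y, rfl⟩, ?_⟩
          have hVa : σ (Frun σ e pt y) a = σ (Frun σ e pt
              (fun b => if _ : b < a then zbr σ e pt (Set.range hm) z b else true)) a := by
            refine V_coh σ e pt hσ fun c hc => ?_
            rcases lt_or_eq_of_le hc with h | rfl
            · rw [hyx c h, dif_pos h]
            · rw [hya, dif_neg (lt_irrefl c)]
          rw [← hVa]; exact hmem y a
      by_cases hcond : z ∈ closure (Set.range hm ∩ σ (Frun σ e pt
          (fun b => if _ : b < a then zbr σ e pt (Set.range hm) z b else true)) a)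
      · have hxa : zbr σ e pt (Set.range hm) z a = true := by
          rw [zbr_eq σ e pt (Set.range hm) z a]
          exact if_pos hcond
        have hVa : σ (Frun σ e pt (zbr σ e pt (Set.range hm) z)) a = σ (Frun σ e pt
            (fun b => if _ : b < a then zbr σ e pt (Set.range hm) z b else true)) a := by
          refine V_coh σ e pt hσ fun c hc => ?_
          rcases lt_or_eq_of_le hc with h | rfl
          · rw [dif_pos h]
          · rw [hxa, dif_neg (lt_irrefl c)]
        rw [hVa]; exact hcond
      · have hxa : zbr σ e pt (Set.range hm) z a = false := by
          rw [zbr_eq σ e pt (Set.range hm) z a]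
          exact if_neg hcond
        have hsp := closure_mono hsplit hPclaim
        rw [closure_union] at hsp
        rcases hsp with h0 | h1
        · have hVa : σ (Frun σ e pt (zbr σ e pt (Set.range hm) z)) a = σ (Frun σ e pt
              (fun b => if _ : b < a then zbr σ e pt (Set.range hm) z b else false)) a := by
            refine V_coh σ e pt hσ fun c hc => ?_
            rcases lt_or_eq_of_le hc with h | rfl
            · rw [dif_pos h]
            · rw [hxa, dif_neg (lt_irrefl c)]
          rw [hVa]; exact h0
        · exact absurd h1 hcond
    have hfinal : ∀ a, z ∈ closure (σ (Frun σ e pt (zbr σ e pt (Set.range hm) z)) a) :=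
      fun a => closure_mono Set.inter_subset_right (claim a)
    rw [hclsingle _ z hfinal]
    exact Set.mem_range_self _
  · -- the homeomorphism
    have himg : ∀ (a : κ.ord.ToType) (y : κ.ord.ToType → Bool),
        hm '' {x | ∀ b, b < a → x b = y b} = Set.range hm ∩ Pst σ e pt a y := by
      intro a y
      apply Set.Subset.antisymm
      · rintro _ ⟨x, hx, rfl⟩
        refine ⟨⟨x, rfl⟩, ?_⟩
        have hP : Pst σ e pt a y = Pst σ e pt a x :=
          Pst_coh σ e pt hσ (fun b hb => (hx b hb).symm)
        rw [hP]; exact hmemP x a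
      · rintro _ ⟨⟨x, rfl⟩, hP⟩
        exact ⟨x, fun b hb => branch_eq σ e pt hwin hadd hperf hunc he hP (hmem x) b hb, rfl⟩
    have hcont : Continuous (fun x : GenCantor κ => hm x) := by
      rw [continuous_def]
      intro W hW
      rw [isOpen_iff_forall_mem_open]
      intro x hx
      refine ⟨{y : GenCantor κ | ∀ b, b < nxt hunc ((hsmall x W hW hx).choose) →
        y b = x b}, ?_, ?_, ?_⟩
      · intro y hy
        have hVa : σ (Frun σ e pt y) ((hsmall x W hW hx).choose) =
            σ (Frun σ e pt x) ((hsmall x W hW hx).choose) :=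
          V_coh σ e pt hσ (fun c hc => hy c ((lt_nxt_iff hunc).2 hc))
        exact (hsmall x W hW hx).choose_spec (hVa ▸ hmem y _)
      · exact TopologicalSpace.isOpen_generateFrom_of_mem
          ⟨nxt hunc ((hsmall x W hW hx).choose), x, rfl⟩
      · exact fun b _ => rfl
    have hφbij : Function.Bijective
        (fun x : GenCantor κ => (⟨hm x, Set.mem_range_self x⟩ : ↥(Set.range hm))) := by
      constructor
      · intro x y hxy
        exact hinj (congrArg Subtype.val hxy)
      · rintro ⟨w, x, rfl⟩
        exact ⟨x, rfl⟩
    have hφcont : Continuous (Equiv.ofBijective _ hφbij) := hcont.subtype_mk _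
    have hφopen : IsOpenMap (Equiv.ofBijective _ hφbij) := by
      intro U hU
      have hU' : TopologicalSpace.GenerateOpen
          {U : Set (GenCantor κ) | ∃ (a : κ.ord.ToType) (y : GenCantor κ),
            U = {x : GenCantor κ | ∀ b, b < a → x b = y b}} U := hU
      clear hU
      induction hU' with
      | basic s hs =>
        obtain ⟨a, y, rfl⟩ := hs
        have himg2 : (Equiv.ofBijective _ hφbij) '' {x : GenCantor κ | ∀ b, b < a → x b = y b}
            = Subtype.val ⁻¹' (Pst σ e pt a y) := by
          ext ⟨w, hw⟩
          simp only [Set.mem_image, Set.mem_preimage]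
          constructor
          · rintro ⟨x, hx, hxe⟩
            have hxw : hm x = w := congrArg Subtype.val hxe
            have hmemw : w ∈ Set.range hm ∩ Pst σ e pt a y := by
              rw [← himg a y]; exact ⟨x, hx, hxw⟩
            exact hmemw.2
          · intro hP
            have hmemw : w ∈ hm '' {x | ∀ b, b < a → x b = y b} := by
              rw [himg a y]; exact ⟨hw, hP⟩
            obtain ⟨x, hx, hxw⟩ := hmemw
            exact ⟨x, hx, Subtype.ext hxw⟩
        rw [himg2]
        exact (hinv a y).1.preimage continuous_subtype_val
      | univ =>
        rw [Set.image_univ, Equiv.range_eq_univ]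
        exact isOpen_univ
      | inter s t hs ht IHs IHt =>
        rw [Set.image_inter (Equiv.ofBijective _ hφbij).injective]
        exact IHs.inter IHt
      | sUnion S hS IH =>
        rw [Set.image_sUnion]
        refine isOpen_sUnion ?_
        rintro _ ⟨s, hs, rfl⟩
        exact IH s hs
    exact ⟨(Equiv.toHomeomorphOfContinuousOpen (Equiv.ofBijective _ hφbij)
      hφcont hφopen).symm⟩

end GDST
end

section
/- Every κ-Lindelöf regular Hausdorff space of weight at most κ is an fSC_κ-space. -/
universe u v

open Cardinal Set

namespace GDST

section Aux17

variable {κ : Cardinal.{u}} {X : Type u} [TopologicalSpace X]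

open scoped Classical in
/-- The "previous set" at a stage with a maximal predecessor. -/
noncomputable def Qprev (a : κ.ord.ToType) (prev : ∀ b, b < a → Set X) : Set X :=
  if h : ∃ b₀, b₀ < a ∧ ∀ b, b < a → b ≤ b₀
    then prev (Classical.choose h) (Classical.choose_spec h).1 else Set.univ

/-- Legality-and-shrinking condition for the choice of player II. -/
def pickCond (m : Set X × X) (a : κ.ord.ToType) (prev : ∀ b, b < a → Set X) : Prop :=
  ∃ O : Set X, IsOpen O ∧ m.2 ∈ O ∧ ∃ W : Set X, IsOpen W ∧
    m.1 = W ∩ (⋂ b, ⋂ _ : b < a, prev b ‹_›) ∧ closure O ⊆ W ∩ Qprev a prev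

open scoped Classical in
/-- Auxiliary choice function for the strategy of player II. -/
noncomputable def pickO (m : Set X × X) (a : κ.ord.ToType) (prev : ∀ b, b < a → Set X) :
    Set X :=
  if h : pickCond m a prev then Classical.choose h else Set.univ

/-- The open sets successively chosen by player II. -/
noncomputable def Ofun (f : κ.ord.ToType → Set X × X) : κ.ord.ToType → Set X :=
  (wellFounded_lt (α := κ.ord.ToType)).fix
    (C := fun _ => Set X) (fun a prev => pickO (f a) a prev)

theorem Ofun_eq (f : κ.ord.ToType → Set X × X) (a : κ.ord.ToType) :
    Ofun f a = pickO (f a) a (fun b _ => Ofun f b) :=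
  (wellFounded_lt (α := κ.ord.ToType)).fix_eq _ a

theorem isOpen_Ofun (f : κ.ord.ToType → Set X × X) (a : κ.ord.ToType) :
    IsOpen (Ofun f a) := by
  rw [Ofun_eq]
  unfold pickO
  split
  · next h => exact (Classical.choose_spec h).1
  · exact isOpen_univ

theorem isOpen_Qprev (f : κ.ord.ToType → Set X × X) (a : κ.ord.ToType) :
    IsOpen (Qprev a (fun b _ => Ofun f b)) := by
  unfold Qprev
  split
  · exact isOpen_Ofun f _
  · exact isOpen_univ

theorem mem_Qprev (f : κ.ord.ToType → Set X × X) (a : κ.ord.ToType) {x : X}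
    (hx : x ∈ ⋂ b, ⋂ _ : b < a, Ofun f b) : x ∈ Qprev a (fun b _ => Ofun f b) := by
  unfold Qprev
  split
  · next h =>
    simp only [Set.mem_iInter] at hx
    exact hx _ (Classical.choose_spec h).1
  · exact Set.mem_univ _

theorem Qprev_eq (f : κ.ord.ToType → Set X × X) {a b₀ : κ.ord.ToType}
    (hb₀ : b₀ < a) (hmax : ∀ b, b < a → b ≤ b₀) :
    Qprev a (fun b _ => Ofun f b) = Ofun f b₀ := by
  unfold Qprev
  have hex : ∃ b₀, b₀ < a ∧ ∀ b, b < a → b ≤ b₀ := ⟨b₀, hb₀, hmax⟩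
  have hch : Classical.choose hex = b₀ :=
    le_antisymm (hmax _ (Classical.choose_spec hex).1)
      ((Classical.choose_spec hex).2 _ hb₀)
  rw [dif_pos hex]
  exact congrArg (Ofun f) hch

theorem Ofun_spec [RegularSpace X] (f : κ.ord.ToType → Set X × X) (a : κ.ord.ToType)
    (hx : (f a).2 ∈ ⋂ b, ⋂ _ : b < a, Ofun f b)
    (hx1 : (f a).2 ∈ (f a).1)
    (hW : ∃ W, IsOpen W ∧ (f a).1 = W ∩ ⋂ b, ⋂ _ : b < a, Ofun f b) :
    (f a).2 ∈ Ofun f a ∧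
    (Ofun f a ∩ ⋂ b, ⋂ _ : b < a, Ofun f b) ⊆ (f a).1 ∧
    ∀ b₀, b₀ < a → (∀ b, b < a → b ≤ b₀) → closure (Ofun f a) ⊆ Ofun f b₀ := by
  obtain ⟨W, hWopen, hWeq⟩ := hW
  have hxW : (f a).2 ∈ W := by rw [hWeq] at hx1; exact hx1.1
  have hxQ : (f a).2 ∈ Qprev a (fun b _ => Ofun f b) := mem_Qprev f a hx
  obtain ⟨C, hC1, hC2, hC3⟩ :=
    exists_mem_nhds_isClosed_subset
      ((hWopen.inter (isOpen_Qprev f a)).mem_nhds ⟨hxW, hxQ⟩)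
  have hcond : pickCond (f a) a (fun b _ => Ofun f b) :=
    ⟨interior C, isOpen_interior, mem_interior_iff_mem_nhds.2 hC1, W, hWopen, hWeq,
      (closure_minimal interior_subset hC2).trans hC3⟩
  have hOeq : Ofun f a = Classical.choose hcond := by
    rw [Ofun_eq]
    unfold pickO
    rw [dif_pos hcond]
  obtain ⟨hO1, hO2, W', hW'1, hW'2, hW'3⟩ := Classical.choose_spec hcond
  rw [← hOeq] at hO1 hO2 hW'3
  refine ⟨hO2, ?_, ?_⟩
  · intro y hy
    rw [hW'2]
    exact ⟨(subset_closure.trans (hW'3.trans Set.inter_subset_left)) hy.1, hy.2⟩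
  · intro b₀ hb₀ hmax
    refine hW'3.trans (Set.inter_subset_right.trans ?_)
    rw [Qprev_eq f hb₀ hmax]

theorem Ofun_congr (f g : κ.ord.ToType → Set X × X) :
    ∀ a, (∀ b, b ≤ a → f b = g b) → Ofun f a = Ofun g a := fun a =>
  (wellFounded_lt (α := κ.ord.ToType)).induction
    (C := fun a => (∀ b, b ≤ a → f b = g b) → Ofun f a = Ofun g a) a
    (fun a IH h => by
      have hprev : (fun b (_ : b < a) => Ofun f b) = (fun b (_ : b < a) => Ofun g b) := by
        funext b hb
        exact IH b hb fun c hc => h c (hc.trans hb.le)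
      rw [Ofun_eq, Ofun_eq, h a le_rfl, hprev])


/-- The strategy of player II. -/
noncomputable def sigmaFun : Strategy κ X :=
  fun f a => ⋂ b, ⋂ _ : b ≤ a, Ofun f b

theorem interBelow_sigmaFun (f : IMoves κ X) (a : κ.ord.ToType) :
    InterBelow (sigmaFun f) a = ⋂ b, ⋂ _ : b < a, Ofun f b := by
  apply Set.Subset.antisymm
  · intro x hx
    simp only [InterBelow, sigmaFun, Set.mem_iInter] at hx ⊢
    intro b hb
    exact hx b hb b le_rfl
  · intro x hx
    simp only [InterBelow, sigmaFun, Set.mem_iInter] at hx ⊢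
    intro b hb c hc
    exact hx c (hc.trans_lt hb)

theorem sigmaFun_eq (f : IMoves κ X) (a : κ.ord.ToType) :
    sigmaFun f a = Ofun f a ∩ ⋂ b, ⋂ _ : b < a, Ofun f b := by
  apply Set.Subset.antisymm
  · intro x hx
    simp only [sigmaFun, Set.mem_iInter] at hx
    exact ⟨hx a le_rfl, Set.mem_iInter.2 fun b => Set.mem_iInter.2 fun hb => hx b hb.le⟩
  · intro x hx
    simp only [sigmaFun, Set.mem_iInter]
    intro b hb
    rcases eq_or_lt_of_le hb with rfl | hb'
    · exact hx.1
    · exact Set.mem_iInter.1 (Set.mem_iInter.1 hx.2 b) hb'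

theorem sigmaFun_key [RegularSpace X] (f : IMoves κ X) (a : κ.ord.ToType)
    (hI : LegalI sigmaFun f a) :
    (f a).2 ∈ Ofun f a ∧ sigmaFun f a ⊆ (f a).1 ∧
    (∀ b₀, b₀ < a → (∀ b, b < a → b ≤ b₀) → closure (Ofun f a) ⊆ Ofun f b₀) ∧
    (f a).2 ∈ ⋂ b, ⋂ _ : b < a, Ofun f b := by
  obtain ⟨⟨W, hWopen, hWeq⟩, hx1⟩ := hI
  rw [interBelow_sigmaFun f a] at hWeq
  have hxIB : (f a).2 ∈ ⋂ b, ⋂ _ : b < a, Ofun f b := by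
    rw [hWeq] at hx1
    exact hx1.2
  rw [hWeq] at hx1
  obtain ⟨h1, h2, h3⟩ := Ofun_spec f a hxIB (hWeq ▸ hx1) ⟨W, hWopen, hWeq⟩
  refine ⟨h1, ?_, h3, hxIB⟩
  rw [sigmaFun_eq f a]
  exact h2

end Aux17

/-- every κ-Lindelöf regular Hausdorff space of weight at most κ is an
fSC_κ-space. -/
theorem stmt_17 (κ : Cardinal.{u}) (hreg : κ.IsRegular) (hunc : ℵ₀ < κ)
    (hpow : (2 : Cardinal.{u}) ^< κ = κ)
    (X : Type u) [TopologicalSpace X] [T2Space X] [RegularSpace X]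
    (hw : HasWeightLE κ X) (hlin : KLindelof κ X) : fSCSpace κ X := by
  classical
  refine ⟨hw, sigmaFun, ?_, ?_, ?_⟩
  · -- σ is a strategy for II
    intro f g a hfg
    simp only [sigmaFun]
    exact Set.iInter₂_congr fun b hb => Ofun_congr f g b fun c hc => hfg c (hc.trans hb)
  · -- σ answers legally
    intro f a _ hI
    obtain ⟨h1, h2, _, hxIB⟩ := sigmaFun_key f a hI
    refine ⟨⟨Ofun f a, isOpen_Ofun f a, by rw [interBelow_sigmaFun]; exact sigmaFun_eq f a⟩,
      ?_, h2⟩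
    rw [sigmaFun_eq f a]
    exact ⟨h1, hxIB⟩
  · -- σ is winning
    intro f hrun
    right
    have hxmem : ∀ a, (f a).2 ∈ ⋂ b, ⋂ _ : b < a, Ofun f b :=
      fun a => (sigmaFun_key f a (hrun a).1).2.2.2
    -- the intersection of the closures is nonempty, by κ-Lindelöfness
    have hne : (⋂ a, closure (Ofun f a)).Nonempty := by
      by_contra hemp
      rw [Set.not_nonempty_iff_eq_empty] at hemp
      obtain ⟨𝒱, h𝒱sub, h𝒱card, h𝒱cover⟩ := hlin (Set.range fun a => (closure (Ofun f a))ᶜ)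
        (by rintro U ⟨a, rfl⟩; exact isClosed_closure.isOpen_compl)
        (by rw [Set.sUnion_range, ← Set.compl_iInter, hemp, Set.compl_empty])
      have hch : ∀ V : 𝒱, ∃ a, (closure (Ofun f a))ᶜ = (V : Set X) := fun V => h𝒱sub V.2
      choose idx hidx using hch
      haveI : IsWellOrder κ.ord.ToType (· < ·) := isWellOrder_lt
      have hbd : Set.Bounded (· < ·) (Set.range idx) := by
        have hnc : ¬ IsCofinal (Set.range idx) := fun hc =>
          ((Order.cof_le hc).trans Cardinal.mk_range_le).not_gt
            (by rw [Ordinal.cof_toType, hreg.cof_eq]; exact h𝒱card)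
        obtain ⟨x, hx⟩ := not_isCofinal_iff.1 hnc
        exact ⟨x, hx⟩
      obtain ⟨γ, hγ⟩ := hbd
      have hxγ := hxmem γ
      simp only [Set.mem_iInter] at hxγ
      have hmem : (f γ).2 ∈ ⋃₀ 𝒱 := by rw [h𝒱cover]; trivial
      obtain ⟨V, hV, hxV⟩ := hmem
      have hxV' : (f γ).2 ∈ (closure (Ofun f (idx ⟨V, hV⟩)))ᶜ := by
        rw [hidx ⟨V, hV⟩]; exact hxV
      exact hxV' (subset_closure (hxγ _ (hγ _ (Set.mem_range_self (f := idx) ⟨V, hV⟩))))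
    obtain ⟨y, hy⟩ := hne
    simp only [Set.mem_iInter] at hy
    have hyO : ∀ a, y ∈ Ofun f a := by
      intro a
      haveI : NoMaxOrder κ.ord.ToType := Cardinal.noMaxOrder hunc.le
      obtain ⟨c₀, hc₀⟩ := exists_gt a
      have hTne : {b : κ.ord.ToType | a < b}.Nonempty := ⟨c₀, hc₀⟩
      set c := (wellFounded_lt (α := κ.ord.ToType)).min _ hTne with hc
      have hac : a < c := (wellFounded_lt (α := κ.ord.ToType)).min_mem _ hTne
      have hmax : ∀ b, b < c → b ≤ a := fun b hb =>
        not_lt.1 fun hab =>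
          (wellFounded_lt (α := κ.ord.ToType)).not_lt_min _ hab hb
      exact (sigmaFun_key f c (hrun c).1).2.2.1 a hac hmax (hy c)
    exact ⟨y, Set.mem_iInter.2 fun a =>
      Set.mem_iInter.2 fun b => Set.mem_iInter.2 fun _ => hyO b⟩


end GDST
end
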